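/- arXiv:2602.11892 — 10 statements merged into one kernel-verified Lean document; each statement's English description precedes it below -/
import Mathlib

section
/- Let D be an acyclic orientation of an undirected graph G, and let D' be another orientation of G such that every vertex has the same out-degree and the same in-degree in D' as in D. Then D' = D. -/
variable {α : Type*}

/-- An oriented graph: a finite set of arcs with no loops and at most one
arc between any pair of vertices. -/
def Oriented (D : Finset (α × α)) : Prop :=
  ∀ a ∈ D, a.1 ≠ a.2 ∧ (a.2, a.1) ∉ D

/-- Out-degree of a vertex in a finite digraph. -/
def outDeg [DecidableEq α] (D : Finset (α × α)) (v : α) : ℕ :=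
  (D.filter fun a => a.1 = v).card

/-- In-degree of a vertex in a finite digraph. -/
def inDeg [DecidableEq α] (D : Finset (α × α)) (v : α) : ℕ :=
  (D.filter fun a => a.2 = v).card

/-- A digraph has a directed cycle iff some vertex reaches itself by a
nonempty directed walk. -/
def HasDirCycle (D : Finset (α × α)) : Prop :=
  ∃ v : α, Relation.TransGen (fun a b => (a, b) ∈ D) v v

/-- Two arcs have the same direction with respect to a shared vertex `v`:
both leave `v` or both enter `v`. -/
def SameDir (e f : α × α) (v : α) : Prop :=
  (e.1 = v ∧ f.1 = v) ∨ (e.2 = v ∧ f.2 = v)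

/-- An alternating closed trail: a cyclic sequence of `2m` distinct arcs
`e 0, e 1, …` (indices mod `2m`) such that consecutive arcs share a vertex
`v i` at which they have the same direction, with `v i ≠ v (i+1)`. -/
def HasAltTrail (D : Finset (α × α)) : Prop :=
  ∃ m : ℕ, 0 < m ∧ ∃ (e : ZMod (2 * m) → α × α) (v : ZMod (2 * m) → α),
    Function.Injective e ∧ (∀ i, e i ∈ D) ∧
    (∀ i, SameDir (e i) (e (i + 1)) (v i)) ∧ (∀ i, v i ≠ v (i + 1))

/-- A Bernstein oriented graph: no directed cycles and no alternating
closed trails. -/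
def Bernstein (D : Finset (α × α)) : Prop :=
  Oriented D ∧ ¬ HasDirCycle D ∧ ¬ HasAltTrail D

/-- `D` is an orientation of the simple graph `G`: every arc of `D` is an
edge of `G`, and every edge of `G` carries exactly one of the two possible
arcs. -/
def IsOrientation (G : SimpleGraph α) (D : Finset (α × α)) : Prop :=
  (∀ a ∈ D, G.Adj a.1 a.2) ∧ ∀ x y : α, G.Adj x y → ((x, y) ∈ D ↔ (y, x) ∉ D)

lemma cycle_aux (S : Finset (α × α)) (V : Finset α) (hV : V.Nonempty)
    (f : α → α) (hf : ∀ v ∈ V, (v, f v) ∈ S ∧ f v ∈ V) :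
    ∃ v, Relation.TransGen (fun a b => (a, b) ∈ S) v v := by
  obtain ⟨x0, hx0⟩ := hV
  have hmem : ∀ n, f^[n] x0 ∈ V := by
    intro n
    induction n with
    | zero => simpa using hx0
    | succ k ih => rw [Function.iterate_succ_apply']; exact (hf _ ih).2
  have hstep : ∀ i j, i < j →
      Relation.TransGen (fun a b => (a, b) ∈ S) (f^[i] x0) (f^[j] x0) := by
    intro i j hij
    induction j with
    | zero => omega
    | succ k ih =>
      rcases Nat.lt_succ_iff_lt_or_eq.mp hij with h | h
      · exact (ih h).tail (by rw [Function.iterate_succ_apply']; exact (hf _ (hmem k)).1)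
      · subst h
        exact Relation.TransGen.single
          (by rw [Function.iterate_succ_apply']; exact (hf _ (hmem i)).1)
  obtain ⟨i, j, hne, heq⟩ :=
    Finite.exists_ne_map_eq_of_infinite (fun n : ℕ => (⟨f^[n] x0, hmem n⟩ : V))
  have heq' : f^[i] x0 = f^[j] x0 := congrArg Subtype.val heq
  rcases hne.lt_or_gt with h | h
  · exact ⟨f^[i] x0, heq' ▸ hstep i j h⟩
  · exact ⟨f^[j] x0, heq'.symm ▸ hstep j i h⟩


/-- An acyclic orientation of a graph is determined by its in- and
out-degree sequences. -/
theorem stmt0 [DecidableEq α] (G : SimpleGraph α) (D D' : Finset (α × α))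
    (hD : IsOrientation G D) (hD' : IsOrientation G D')
    (hacyc : ¬ HasDirCycle D)
    (hdeg : ∀ v : α, outDeg D' v = outDeg D v ∧ inDeg D' v = inDeg D v) :
    D' = D := by
  classical
  set S : Finset (α × α) := D \ D' with hS
  set T : Finset (α × α) := D' \ D with hT
  -- reversal correspondence between T and S
  have hTS : ∀ x y : α, (x, y) ∈ T ↔ (y, x) ∈ S := by
    intro x y
    constructor
    · rintro hxy
      obtain ⟨h1, h2⟩ := Finset.mem_sdiff.mp hxy
      have hadj : G.Adj x y := hD'.1 _ h1
      have hyxD : (y, x) ∈ D := by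
        by_contra h
        exact h2 ((hD.2 x y hadj).mpr (fun hyx => h hyx))
      have hyxD' : (y, x) ∉ D' := fun h => ((hD'.2 x y hadj).mp h1) h
      exact Finset.mem_sdiff.mpr ⟨hyxD, hyxD'⟩
    · rintro hyx
      obtain ⟨h1, h2⟩ := Finset.mem_sdiff.mp hyx
      have hadj : G.Adj y x := hD.1 _ h1
      have hxyD' : (x, y) ∈ D' := by
        by_contra h
        exact h2 ((hD'.2 y x hadj).mpr (fun hxy => h hxy))
      have hxyD : (x, y) ∉ D := fun h => ((hD.2 y x hadj).mp h1) h
      exact Finset.mem_sdiff.mpr ⟨hxyD', hxyD⟩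
  -- out-degree of T at v equals in-degree of S at v
  have hTout : ∀ v, outDeg T v = inDeg S v := by
    intro v
    unfold outDeg inDeg
    apply Finset.card_bij (fun a _ => Prod.swap a)
    · rintro ⟨x, y⟩ ha
      rw [Finset.mem_filter] at ha ⊢
      exact ⟨(hTS x y).mp ha.1, ha.2⟩
    · rintro ⟨x, y⟩ _ ⟨x', y'⟩ _ h
      exact Prod.swap_injective h
    · rintro ⟨y, x⟩ hb
      rw [Finset.mem_filter] at hb
      exact ⟨(x, y), Finset.mem_filter.mpr ⟨(hTS x y).mpr hb.1, hb.2⟩, rfl⟩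
  have hTin : ∀ v, inDeg T v = outDeg S v := by
    intro v
    unfold outDeg inDeg
    apply Finset.card_bij (fun a _ => Prod.swap a)
    · rintro ⟨x, y⟩ ha
      rw [Finset.mem_filter] at ha ⊢
      exact ⟨(hTS x y).mp ha.1, ha.2⟩
    · rintro ⟨x, y⟩ _ ⟨x', y'⟩ _ h
      exact Prod.swap_injective h
    · rintro ⟨y, x⟩ hb
      rw [Finset.mem_filter] at hb
      exact ⟨(x, y), Finset.mem_filter.mpr ⟨(hTS x y).mpr hb.1, hb.2⟩, rfl⟩
  -- decompositions of degrees
  have hsplit : ∀ (E F : Finset (α × α)) (p : α × α → Prop) [DecidablePred p],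
      (E.filter p).card = ((E ∩ F).filter p).card + ((E \ F).filter p).card := by
    intro E F p _
    have hEF : E ∩ F ∪ E \ F = E := by
      ext a; simp only [Finset.mem_union, Finset.mem_inter, Finset.mem_sdiff]; tauto
    rw [← Finset.card_union_of_disjoint, ← Finset.filter_union, hEF]
    exact Finset.disjoint_filter_filter
      (Finset.disjoint_sdiff.mono_left Finset.inter_subset_right)
  -- out_S v = in_S v
  have hkey : ∀ v, outDeg S v = inDeg S v := by
    intro v
    have h1 := (hdeg v).1
    unfold outDeg at h1
    rw [hsplit D' D (fun a => a.1 = v), hsplit D D' (fun a => a.1 = v),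
        Finset.inter_comm D D', ← hS, ← hT] at h1
    have := hTout v
    unfold outDeg inDeg at this ⊢
    omega
  -- S must be empty
  have hSempty : S = ∅ := by
    by_contra h
    obtain ⟨⟨x, y⟩, hxy⟩ := Finset.nonempty_of_ne_empty h
    set V : Finset α := S.image Prod.snd with hV
    have hVne : V.Nonempty := ⟨y, Finset.mem_image.mpr ⟨(x, y), hxy, rfl⟩⟩
    have hout : ∀ v ∈ V, ∃ w, (v, w) ∈ S := by
      intro v hv
      obtain ⟨⟨a, b⟩, hab, hb⟩ := Finset.mem_image.mp hv
      have hin : 0 < inDeg S v :=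
        Finset.card_pos.mpr ⟨(a, b), Finset.mem_filter.mpr ⟨hab, hb⟩⟩
      have hout : 0 < outDeg S v := hkey v ▸ hin
      obtain ⟨⟨c, d⟩, hcd⟩ := Finset.card_pos.mp hout
      rw [Finset.mem_filter] at hcd
      exact ⟨d, by have h2 : c = v := hcd.2; subst h2; exact hcd.1⟩
    set f : α → α := fun v => if h : ∃ w, (v, w) ∈ S then h.choose else v with hfdef
    have hf : ∀ v ∈ V, (v, f v) ∈ S ∧ f v ∈ V := by
      intro v hv
      have h := hout v hv
      have harc : (v, f v) ∈ S := by
        simp only [hfdef, dif_pos h]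
        exact h.choose_spec
      exact ⟨harc, Finset.mem_image.mpr ⟨(v, f v), harc, rfl⟩⟩
    obtain ⟨w, hw⟩ := cycle_aux S V hVne f hf
    exact hacyc ⟨w, Relation.TransGen.mono (fun a b hab => (Finset.mem_sdiff.mp hab).1) _ _ hw⟩
  have hTempty : T = ∅ := by
    rw [Finset.eq_empty_iff_forall_notMem]
    rintro ⟨x, y⟩ hxy
    have := (hTS x y).mp hxy
    rw [hSempty] at this
    exact absurd this (Finset.notMem_empty _)
  have h1 : D' ⊆ D := Finset.sdiff_eq_empty_iff_subset.mp hTempty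
  have h2 : D ⊆ D' := Finset.sdiff_eq_empty_iff_subset.mp hSempty
  exact Finset.Subset.antisymm h1 h2
end

section
/- Let D be an oriented graph admitting two distinct red/blue edge-colourings (R,B) and (R',B') such that for every vertex v the red out-degree, red in-degree, blue out-degree and blue in-degree of v agree between the two colourings. Then D contains an alternating closed trail. -/
variable {α : Type*}

lemma keyTrail [DecidableEq α] (S : Finset (α × α)) (hS : S.Nonempty)
    (hloop : ∀ a ∈ S, a.1 ≠ a.2)
    (c : α × α → Bool) (tf hf : α × α → α × α)
    (htf : ∀ e ∈ S, tf e ∈ S ∧ (tf e).1 = e.1 ∧ tf (tf e) = e ∧ c (tf e) = !c e)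
    (hhf : ∀ e ∈ S, hf e ∈ S ∧ (hf e).2 = e.2 ∧ hf (hf e) = e ∧ c (hf e) = !c e) :
    ∃ m : ℕ, 0 < m ∧ ∃ (e : ZMod (2 * m) → α × α) (v : ZMod (2 * m) → α),
      Function.Injective e ∧ (∀ i, e i ∈ S) ∧
      (∀ i, SameDir (e i) (e (i + 1)) (v i)) ∧ (∀ i, v i ≠ v (i + 1)) := by
  classical
  obtain ⟨e0, he0⟩ := hS
  set π : α × α → α × α := fun x => hf (tf x) with hπdef
  have hπS : ∀ e ∈ S, π e ∈ S := fun e he => (hhf _ (htf e he).1).1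
  have hπinj : ∀ x ∈ S, ∀ y ∈ S, π x = π y → x = y := by
    intro x hx y hy hxy
    have h1 : hf (π x) = tf x := (hhf _ (htf x hx).1).2.2.1
    have h2 : hf (π y) = tf y := (hhf _ (htf y hy).1).2.2.1
    have h3 : tf x = tf y := by rw [← h1, ← h2, hxy]
    have h4 : tf (tf x) = tf (tf y) := by rw [h3]
    rwa [(htf x hx).2.2.1, (htf y hy).2.2.1] at h4
  have hπc : ∀ e ∈ S, c (π e) = c e := by
    intro e he
    have h1 := (hhf _ (htf e he).1).2.2.2
    rw [hπdef]
    simp only []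
    rw [h1, (htf e he).2.2.2, Bool.not_not]
  have hiter : ∀ k, π^[k] e0 ∈ S := by
    intro k
    induction k with
    | zero => simpa using he0
    | succ n ih => rw [Function.iterate_succ_apply']; exact hπS _ ih
  have hiterc : ∀ k, c (π^[k] e0) = c e0 := by
    intro k
    induction k with
    | zero => rfl
    | succ n ih => rw [Function.iterate_succ_apply', hπc _ (hiter n), ih]
  have cancel : ∀ i d, π^[i] e0 = π^[i + d] e0 → π^[d] e0 = e0 := by
    intro i
    induction i with
    | zero => intro d hd; simpa using hd.symm
    | succ n ih =>
      intro d hd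
      have h1 : n + 1 + d = (n + d) + 1 := by omega
      rw [h1, Function.iterate_succ_apply', Function.iterate_succ_apply'] at hd
      exact ih d (hπinj _ (hiter n) _ (hiter (n + d)) hd)
  have existsm : ∃ k, 0 < k ∧ π^[k] e0 = e0 := by
    have hni : ¬ Function.Injective
        (fun k : Fin (S.card + 1) => (⟨π^[(k : ℕ)] e0, hiter k⟩ : {x // x ∈ S})) := by
      intro hinj
      have h := Fintype.card_le_of_injective _ hinj
      rw [Fintype.card_coe, Fintype.card_fin] at h
      omega
    rw [Function.not_injective_iff] at hni
    obtain ⟨a, b, hab, hne'⟩ := hni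
    have hab' : π^[(a : ℕ)] e0 = π^[(b : ℕ)] e0 := congrArg Subtype.val hab
    have hne'' : (a : ℕ) ≠ (b : ℕ) := fun h => hne' (Fin.ext h)
    rcases Nat.lt_or_ge (a : ℕ) (b : ℕ) with hlt | hge
    · refine ⟨(b : ℕ) - (a : ℕ), by omega, cancel a _ ?_⟩
      rw [Nat.add_sub_cancel' hlt.le]; exact hab'
    · refine ⟨(a : ℕ) - (b : ℕ), by omega, cancel b _ ?_⟩
      rw [Nat.add_sub_cancel' hge]; exact hab'.symm
  set m := Nat.find existsm with hmdef
  have hm0 : 0 < m := (Nat.find_spec existsm).1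
  have hm : π^[m] e0 = e0 := (Nat.find_spec existsm).2
  have orbd : ∀ i j, i < m → j < m → π^[i] e0 = π^[j] e0 → i = j := by
    intro i j hi hj hij
    by_contra hij'
    rcases Nat.lt_or_ge i j with hlt | hge
    · have h1 : π^[j - i] e0 = e0 := cancel i _ (by rw [Nat.add_sub_cancel' hlt.le]; exact hij)
      exact Nat.find_min existsm (show j - i < m by omega) ⟨by omega, h1⟩
    · have hlt : j < i := by omega
      have h1 : π^[i - j] e0 = e0 := cancel j _ (by rw [Nat.add_sub_cancel' hlt.le]; exact hij.symm)
      exact Nat.find_min existsm (show i - j < m by omega) ⟨by omega, h1⟩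
  set step : ℕ → α × α := fun n => if n % 2 = 0 then π^[n / 2] e0 else tf (π^[n / 2] e0)
    with hstepdef
  have stepS : ∀ n, step n ∈ S := by
    intro n
    simp only [hstepdef]
    split
    · exact hiter _
    · exact (htf _ (hiter _)).1
  have step_succ : ∀ n, step (n + 1) = if n % 2 = 0 then tf (step n) else hf (step n) := by
    intro n
    rcases Nat.mod_two_eq_zero_or_one n with h2 | h2
    · have e1 : (n + 1) % 2 = 1 := by omega
      have e2 : (n + 1) / 2 = n / 2 := by omega
      simp only [hstepdef, e1, e2, h2, if_pos, if_neg]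
      simp
    · have e1 : (n + 1) % 2 = 0 := by omega
      have e2 : (n + 1) / 2 = n / 2 + 1 := by omega
      simp only [hstepdef, e1, e2, h2]
      simp only [if_pos, one_ne_zero, if_neg, Function.iterate_succ_apply']
      rfl
  have stepc : ∀ n, c (step n) = if n % 2 = 0 then c e0 else !(c e0) := by
    intro n
    simp only [hstepdef]
    split
    · exact hiterc _
    · rw [(htf _ (hiter _)).2.2.2, hiterc]
  have step_per : ∀ n, step (n + 2 * m) = step n := by
    intro n
    have e1 : (n + 2 * m) % 2 = n % 2 := by omega
    have e2 : (n + 2 * m) / 2 = n / 2 + m := by omega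
    simp only [hstepdef, e1, e2, Function.iterate_add_apply, hm]
  have step_mod : ∀ n, step (n % (2 * m)) = step n := by
    have haux : ∀ q r, step (r + 2 * m * q) = step r := by
      intro q
      induction q with
      | zero => intro r; simp
      | succ k ih =>
        intro r
        have h1 : r + 2 * m * (k + 1) = (r + 2 * m * k) + 2 * m := by ring
        rw [h1, step_per, ih]
    intro n
    conv_rhs => rw [← Nat.mod_add_div n (2 * m)]
    exact (haux _ _).symm
  haveI : NeZero (2 * m) := ⟨by omega⟩
  haveI : Fact (1 < 2 * m) := ⟨by omega⟩
  have hval : ∀ i : ZMod (2 * m), ((i + 1 : ZMod (2 * m))).val = (i.val + 1) % (2 * m) := by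
    intro i; rw [ZMod.val_add, ZMod.val_one]
  have esucc : ∀ i : ZMod (2 * m), step ((i + 1 : ZMod (2 * m)).val) = step (i.val + 1) := by
    intro i; rw [hval, step_mod]
  have tpres : ∀ n, n % 2 = 0 → (step (n + 1)).1 = (step n).1 ∧ step (n + 1) = tf (step n) := by
    intro n hn
    have h1 : step (n + 1) = tf (step n) := by rw [step_succ, if_pos hn]
    exact ⟨by rw [h1, (htf _ (stepS n)).2.1], h1⟩
  have hpres : ∀ n, n % 2 = 1 → (step (n + 1)).2 = (step n).2 ∧ step (n + 1) = hf (step n) := by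
    intro n hn
    have h1 : step (n + 1) = hf (step n) := by rw [step_succ, if_neg (by omega)]
    exact ⟨by rw [h1, (hhf _ (stepS n)).2.1], h1⟩
  refine ⟨m, hm0, fun i => step i.val,
    fun i => if i.val % 2 = 0 then (step i.val).1 else (step i.val).2, ?_, fun i => stepS _, ?_, ?_⟩
  · -- injectivity
    intro i j hij
    simp only [] at hij
    have hi := ZMod.val_lt i
    have hj := ZMod.val_lt j
    have hci := stepc i.val
    have hcj := stepc j.val
    rw [hij] at hci
    apply ZMod.val_injective
    rcases Nat.mod_two_eq_zero_or_one i.val with hi2 | hi2 <;>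
      rcases Nat.mod_two_eq_zero_or_one j.val with hj2 | hj2
    · have hsi : step i.val = π^[i.val / 2] e0 := by rw [hstepdef]; simp only [hi2]; simp
      have hsj : step j.val = π^[j.val / 2] e0 := by rw [hstepdef]; simp only [hj2]; simp
      rw [hsi, hsj] at hij
      have := orbd _ _ (by omega) (by omega) hij
      omega
    · rw [hi2] at hci; rw [hj2] at hcj
      simp at hci hcj
      rw [hci] at hcj
      simp at hcj
    · rw [hi2] at hci; rw [hj2] at hcj
      simp at hci hcj
      rw [hci] at hcj
      simp at hcj
    · have hsi : step i.val = tf (π^[i.val / 2] e0) := by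
        rw [hstepdef]; simp only [hi2]; simp
      have hsj : step j.val = tf (π^[j.val / 2] e0) := by
        rw [hstepdef]; simp only [hj2]; simp
      rw [hsi, hsj] at hij
      have h4 : tf (tf (π^[i.val / 2] e0)) = tf (tf (π^[j.val / 2] e0)) := by rw [hij]
      rw [(htf _ (hiter _)).2.2.1, (htf _ (hiter _)).2.2.1] at h4
      have := orbd _ _ (by omega) (by omega) h4
      omega
  · -- SameDir
    intro i
    simp only []
    rw [esucc i]
    rcases Nat.mod_two_eq_zero_or_one i.val with h2 | h2
    · rw [if_pos h2]
      exact Or.inl ⟨rfl, (tpres i.val h2).1⟩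
    · rw [if_neg (by omega)]
      exact Or.inr ⟨rfl, (hpres i.val h2).1⟩
  · -- v distinct
    intro i
    simp only []
    have hpar : ((i + 1 : ZMod (2 * m))).val % 2 = (i.val + 1) % 2 := by
      rw [hval]; exact Nat.mod_mod_of_dvd _ ⟨m, rfl⟩
    rw [esucc i]
    rcases Nat.mod_two_eq_zero_or_one i.val with h2 | h2
    · rw [if_pos h2, if_neg (by omega)]
      rw [(tpres i.val h2).2, ← (htf _ (stepS i.val)).2.1, ← (tpres i.val h2).2]
      exact hloop _ (stepS _)
    · rw [if_neg (by omega), if_pos (by omega)]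
      rw [(hpres i.val h2).2, ← (hhf _ (stepS i.val)).2.1, ← (hpres i.val h2).2]
      exact (hloop _ (stepS _)).symm

/-- If an oriented graph has two distinct red/blue colourings with the same
red/blue in- and out-degrees at every vertex, it has an alternating closed
trail. -/
theorem stmt1 [DecidableEq α] (D R B R' B' : Finset (α × α))
    (hor : Oriented D)
    (hRB : R ∪ B = D) (hdisj : Disjoint R B)
    (hRB' : R' ∪ B' = D) (hdisj' : Disjoint R' B')
    (hne : (R, B) ≠ (R', B'))
    (hdeg : ∀ v : α, outDeg R v = outDeg R' v ∧ inDeg R v = inDeg R' v ∧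
      outDeg B v = outDeg B' v ∧ inDeg B v = inDeg B' v) :
    HasAltTrail D := by
  classical
  have hRD : R ⊆ D := hRB ▸ Finset.subset_union_left
  have hR'D : R' ⊆ D := hRB' ▸ Finset.subset_union_left
  set X := R \ R' with hXdef
  set Y := R' \ R with hYdef
  have hXY : Disjoint X Y := disjoint_sdiff_sdiff
  -- nonemptiness of symmetric difference
  have hRR' : R ≠ R' := by
    intro h
    apply hne
    have hB : B = D \ R := by
      ext a
      simp only [Finset.mem_sdiff]
      constructor
      · intro ha
        exact ⟨hRB ▸ Finset.mem_union_right _ ha,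
          fun hr => Finset.disjoint_left.mp hdisj hr ha⟩
      · rintro ⟨hd, hr⟩
        rw [← hRB] at hd
        rcases Finset.mem_union.mp hd with h1 | h1
        · exact absurd h1 hr
        · exact h1
    have hB' : B' = D \ R' := by
      ext a
      simp only [Finset.mem_sdiff]
      constructor
      · intro ha
        exact ⟨hRB' ▸ Finset.mem_union_right _ ha,
          fun hr => Finset.disjoint_left.mp hdisj' hr ha⟩
      · rintro ⟨hd, hr⟩
        rw [← hRB'] at hd
        rcases Finset.mem_union.mp hd with h1 | h1
        · exact absurd h1 hr
        · exact h1
    rw [h, hB, hB', h]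
  have hSne : (X ∪ Y).Nonempty := by
    rw [Finset.nonempty_iff_ne_empty]
    intro h
    obtain ⟨h1, h2⟩ := Finset.union_eq_empty.mp h
    exact hRR' (Finset.Subset.antisymm
      (Finset.sdiff_eq_empty_iff_subset.mp h1)
      (Finset.sdiff_eq_empty_iff_subset.mp h2))
  have hSD : X ∪ Y ⊆ D :=
    Finset.union_subset (Finset.sdiff_subset.trans hRD) (Finset.sdiff_subset.trans hR'D)
  have hloop : ∀ a ∈ X ∪ Y, a.1 ≠ a.2 := fun a ha => (hor a (hSD ha)).1
  -- counting
  have splitc : ∀ (A A' : Finset (α × α)) (P : α × α → Prop) [DecidablePred P],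
      (A.filter P).card = ((A ∩ A').filter P).card + ((A \ A').filter P).card := by
    intro A A' P _
    have hdis : Disjoint ((A ∩ A').filter P) ((A \ A').filter P) :=
      Finset.disjoint_filter_filter
        (Finset.sdiff_disjoint.symm.mono_left Finset.inter_subset_right)
    have hun : A ∩ A' ∪ A \ A' = A := by
      ext a
      simp only [Finset.mem_union, Finset.mem_inter, Finset.mem_sdiff]
      tauto
    rw [← Finset.card_union_of_disjoint hdis, ← Finset.filter_union, hun]
  have cardT : ∀ v : α, (X.filter fun a => a.1 = v).card = (Y.filter fun a => a.1 = v).card := by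
    intro v
    have h1 := splitc R R' (fun a => a.1 = v)
    have h2 := splitc R' R (fun a => a.1 = v)
    rw [Finset.inter_comm] at h2
    rw [← hXdef] at h1
    rw [← hYdef] at h2
    have h3 := (hdeg v).1
    simp only [outDeg] at h3
    omega
  have cardH : ∀ v : α, (X.filter fun a => a.2 = v).card = (Y.filter fun a => a.2 = v).card := by
    intro v
    have h1 := splitc R R' (fun a => a.2 = v)
    have h2 := splitc R' R (fun a => a.2 = v)
    rw [Finset.inter_comm] at h2
    rw [← hXdef] at h1
    rw [← hYdef] at h2
    have h3 := (hdeg v).2.1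
    simp only [inDeg] at h3
    omega
  -- the tail-preserving involution
  set eT : ∀ v : α, {x // x ∈ X.filter fun a => a.1 = v} ≃ {y // y ∈ Y.filter fun a => a.1 = v} :=
    fun v => Finset.equivOfCardEq (cardT v) with heTdef
  set eH : ∀ v : α, {x // x ∈ X.filter fun a => a.2 = v} ≃ {y // y ∈ Y.filter fun a => a.2 = v} :=
    fun v => Finset.equivOfCardEq (cardH v) with heHdef
  set tf : α × α → α × α := fun e =>
    if hx : e ∈ X then ((eT e.1) ⟨e, Finset.mem_filter.mpr ⟨hx, rfl⟩⟩).val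
    else if hy : e ∈ Y then ((eT e.1).symm ⟨e, Finset.mem_filter.mpr ⟨hy, rfl⟩⟩).val
    else e with htfdef
  set hf : α × α → α × α := fun e =>
    if hx : e ∈ X then ((eH e.2) ⟨e, Finset.mem_filter.mpr ⟨hx, rfl⟩⟩).val
    else if hy : e ∈ Y then ((eH e.2).symm ⟨e, Finset.mem_filter.mpr ⟨hy, rfl⟩⟩).val
    else e with hhfdef
  have castT : ∀ (w u : α) (hwu : w = u) (z : α × α) (hz : z ∈ X.filter fun a => a.1 = w),
      ((eT w) ⟨z, hz⟩).val = ((eT u) ⟨z, by rw [← hwu]; exact hz⟩).val := by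
    intro w u hwu
    subst hwu
    intro z hz
    rfl
  have castTs : ∀ (w u : α) (hwu : w = u) (z : α × α) (hz : z ∈ Y.filter fun a => a.1 = w),
      ((eT w).symm ⟨z, hz⟩).val = ((eT u).symm ⟨z, by rw [← hwu]; exact hz⟩).val := by
    intro w u hwu
    subst hwu
    intro z hz
    rfl
  have castH : ∀ (w u : α) (hwu : w = u) (z : α × α) (hz : z ∈ X.filter fun a => a.2 = w),
      ((eH w) ⟨z, hz⟩).val = ((eH u) ⟨z, by rw [← hwu]; exact hz⟩).val := by
    intro w u hwu
    subst hwu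
    intro z hz
    rfl
  have castHs : ∀ (w u : α) (hwu : w = u) (z : α × α) (hz : z ∈ Y.filter fun a => a.2 = w),
      ((eH w).symm ⟨z, hz⟩).val = ((eH u).symm ⟨z, by rw [← hwu]; exact hz⟩).val := by
    intro w u hwu
    subst hwu
    intro z hz
    rfl
  have htf : ∀ e ∈ X ∪ Y, tf e ∈ X ∪ Y ∧ (tf e).1 = e.1 ∧ tf (tf e) = e ∧
      (decide (tf e ∈ X)) = !(decide (e ∈ X)) := by
    intro e he
    rcases Finset.mem_union.mp he with hx | hy
    · have hdef : tf e = ((eT e.1) ⟨e, Finset.mem_filter.mpr ⟨hx, rfl⟩⟩).val := by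
        simp only [htfdef]
        rw [dif_pos hx]
      have hmem : tf e ∈ Y.filter fun a => a.1 = e.1 := by
        rw [hdef]; exact ((eT e.1) ⟨e, Finset.mem_filter.mpr ⟨hx, rfl⟩⟩).2
      obtain ⟨hmY, hm1⟩ := Finset.mem_filter.mp hmem
      have hnX : tf e ∉ X := Finset.disjoint_right.mp hXY hmY
      refine ⟨Finset.mem_union_right _ hmY, hm1, ?_, by simp [hx, hnX]⟩
      have hdef2 : tf (tf e) = ((eT (tf e).1).symm ⟨tf e, Finset.mem_filter.mpr ⟨hmY, rfl⟩⟩).val := by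
        simp only [htfdef]
        rw [dif_neg hnX, dif_pos hmY]
      rw [hdef2]
      rw [castTs (tf e).1 e.1 hm1 (tf e) (Finset.mem_filter.mpr ⟨hmY, rfl⟩)]
      have h5 : (⟨tf e, by rw [← hm1]; exact Finset.mem_filter.mpr ⟨hmY, rfl⟩⟩ :
          {y // y ∈ Y.filter fun a => a.1 = e.1}) =
          (eT e.1) ⟨e, Finset.mem_filter.mpr ⟨hx, rfl⟩⟩ := Subtype.ext hdef
      rw [h5, Equiv.symm_apply_apply]
    · have hnx : e ∉ X := Finset.disjoint_right.mp hXY hy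
      have hdef : tf e = ((eT e.1).symm ⟨e, Finset.mem_filter.mpr ⟨hy, rfl⟩⟩).val := by
        simp only [htfdef]
        rw [dif_neg hnx, dif_pos hy]
      have hmem : tf e ∈ X.filter fun a => a.1 = e.1 := by
        rw [hdef]; exact ((eT e.1).symm ⟨e, Finset.mem_filter.mpr ⟨hy, rfl⟩⟩).2
      obtain ⟨hmX, hm1⟩ := Finset.mem_filter.mp hmem
      have hnY : tf e ∉ Y := Finset.disjoint_left.mp hXY hmX
      refine ⟨Finset.mem_union_left _ hmX, hm1, ?_, by simp [hnx, hmX]⟩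
      have hdef2 : tf (tf e) = ((eT (tf e).1) ⟨tf e, Finset.mem_filter.mpr ⟨hmX, rfl⟩⟩).val := by
        simp only [htfdef]
        rw [dif_pos hmX]
      rw [hdef2]
      rw [castT (tf e).1 e.1 hm1 (tf e) (Finset.mem_filter.mpr ⟨hmX, rfl⟩)]
      have h5 : (⟨tf e, by rw [← hm1]; exact Finset.mem_filter.mpr ⟨hmX, rfl⟩⟩ :
          {x // x ∈ X.filter fun a => a.1 = e.1}) =
          (eT e.1).symm ⟨e, Finset.mem_filter.mpr ⟨hy, rfl⟩⟩ := Subtype.ext hdef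
      rw [h5, Equiv.apply_symm_apply]
  have hhf : ∀ e ∈ X ∪ Y, hf e ∈ X ∪ Y ∧ (hf e).2 = e.2 ∧ hf (hf e) = e ∧
      (decide (hf e ∈ X)) = !(decide (e ∈ X)) := by
    intro e he
    rcases Finset.mem_union.mp he with hx | hy
    · have hdef : hf e = ((eH e.2) ⟨e, Finset.mem_filter.mpr ⟨hx, rfl⟩⟩).val := by
        simp only [hhfdef]
        rw [dif_pos hx]
      have hmem : hf e ∈ Y.filter fun a => a.2 = e.2 := by
        rw [hdef]; exact ((eH e.2) ⟨e, Finset.mem_filter.mpr ⟨hx, rfl⟩⟩).2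
      obtain ⟨hmY, hm1⟩ := Finset.mem_filter.mp hmem
      have hnX : hf e ∉ X := Finset.disjoint_right.mp hXY hmY
      refine ⟨Finset.mem_union_right _ hmY, hm1, ?_, by simp [hx, hnX]⟩
      have hdef2 : hf (hf e) = ((eH (hf e).2).symm ⟨hf e, Finset.mem_filter.mpr ⟨hmY, rfl⟩⟩).val := by
        simp only [hhfdef]
        rw [dif_neg hnX, dif_pos hmY]
      rw [hdef2]
      rw [castHs (hf e).2 e.2 hm1 (hf e) (Finset.mem_filter.mpr ⟨hmY, rfl⟩)]
      have h5 : (⟨hf e, by rw [← hm1]; exact Finset.mem_filter.mpr ⟨hmY, rfl⟩⟩ :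
          {y // y ∈ Y.filter fun a => a.2 = e.2}) =
          (eH e.2) ⟨e, Finset.mem_filter.mpr ⟨hx, rfl⟩⟩ := Subtype.ext hdef
      rw [h5, Equiv.symm_apply_apply]
    · have hnx : e ∉ X := Finset.disjoint_right.mp hXY hy
      have hdef : hf e = ((eH e.2).symm ⟨e, Finset.mem_filter.mpr ⟨hy, rfl⟩⟩).val := by
        simp only [hhfdef]
        rw [dif_neg hnx, dif_pos hy]
      have hmem : hf e ∈ X.filter fun a => a.2 = e.2 := by
        rw [hdef]; exact ((eH e.2).symm ⟨e, Finset.mem_filter.mpr ⟨hy, rfl⟩⟩).2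
      obtain ⟨hmX, hm1⟩ := Finset.mem_filter.mp hmem
      have hnY : hf e ∉ Y := Finset.disjoint_left.mp hXY hmX
      refine ⟨Finset.mem_union_left _ hmX, hm1, ?_, by simp [hnx, hmX]⟩
      have hdef2 : hf (hf e) = ((eH (hf e).2) ⟨hf e, Finset.mem_filter.mpr ⟨hmX, rfl⟩⟩).val := by
        simp only [hhfdef]
        rw [dif_pos hmX]
      rw [hdef2]
      rw [castH (hf e).2 e.2 hm1 (hf e) (Finset.mem_filter.mpr ⟨hmX, rfl⟩)]
      have h5 : (⟨hf e, by rw [← hm1]; exact Finset.mem_filter.mpr ⟨hmX, rfl⟩⟩ :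
          {x // x ∈ X.filter fun a => a.2 = e.2}) =
          (eH e.2).symm ⟨e, Finset.mem_filter.mpr ⟨hy, rfl⟩⟩ := Subtype.ext hdef
      rw [h5, Equiv.apply_symm_apply]
  obtain ⟨m, hm0, e, v, hinj, hmem, hsd, hvne⟩ :=
    keyTrail (X ∪ Y) hSne hloop (fun a => decide (a ∈ X)) tf hf htf hhf
  exact ⟨m, hm0, e, v, hinj, fun i => hSD (hmem i), hsd, hvne⟩
end

section
/- Suppose every vertex of a nonempty finite oriented graph has even out-degree and even in-degree. Then the graph contains an alternating closed trail. -/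
variable {α : Type*}

/-- Any finite set of even cardinality carries a fixed-point-free involution. -/
lemma pairing_aux {β : Type*} [DecidableEq β] :
    ∀ S : Finset β, Even S.card →
      ∃ f : β → β, ∀ x ∈ S, f x ∈ S ∧ f x ≠ x ∧ f (f x) = x := by
  intro S
  induction S using Finset.strongInduction with
  | _ S ih =>
    intro h
    rcases S.eq_empty_or_nonempty with rfl | ⟨a, ha⟩
    · exact ⟨id, by simp⟩
    have h2 : 1 < S.card := by
      rcases h with ⟨k, hk⟩
      have : 0 < S.card := Finset.card_pos.mpr ⟨a, ha⟩
      omega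
    obtain ⟨b, hb, hba⟩ := Finset.exists_mem_ne h2 a
    have hsub : {a, b} ⊆ S := by
      intro x hx
      simp only [Finset.mem_insert, Finset.mem_singleton] at hx
      rcases hx with rfl | rfl <;> assumption
    have hTss : S \ {a, b} ⊂ S := Finset.sdiff_ssubset hsub ⟨a, by simp⟩
    have hTeven : Even (S \ {a, b}).card := by
      rw [Finset.card_sdiff_of_subset hsub, Finset.card_pair (Ne.symm hba)]
      rcases h with ⟨k, hk⟩
      exact ⟨k - 1, by omega⟩
    obtain ⟨f, hf⟩ := ih _ hTss hTeven
    set F : β → β := fun x => if x = a then b else if x = b then a else f x with hF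
    have hFa : F a = b := by simp [hF]
    have hFb : F b = a := by simp [hF, hba]
    have hFo : ∀ x, x ≠ a → x ≠ b → F x = f x := by
      intro x h1' h2'
      simp [hF, h1', h2']
    refine ⟨F, ?_⟩
    intro x hx
    by_cases hxa : x = a
    · rw [hxa, hFa]
      exact ⟨hb, hba, hFb⟩
    by_cases hxb : x = b
    · rw [hxb, hFb]
      exact ⟨ha, Ne.symm hba, hFa⟩
    have hxT : x ∈ S \ {a, b} := by simp [hx, hxa, hxb]
    obtain ⟨h1, h2', h3⟩ := hf x hxT
    have hfa : f x ≠ a := by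
      intro hh; rw [hh] at h1; simp at h1
    have hfb : f x ≠ b := by
      intro hh; rw [hh] at h1; simp at h1
    rw [hFo x hxa hxb, hFo _ hfa hfb]
    exact ⟨(Finset.mem_sdiff.mp h1).1, h2', h3⟩

/-- A nonempty oriented graph in which every vertex has even out-degree and
even in-degree contains an alternating closed trail. -/
theorem stmt2 [DecidableEq α] (D : Finset (α × α)) (hor : Oriented D)
    (hne : D.Nonempty)
    (heven : ∀ v : α, Even (outDeg D v) ∧ Even (inDeg D v)) :
    HasAltTrail D := by
  classical
  obtain ⟨e0, he0⟩ := hne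
  have hoe : ∀ v : α, Even ((D.filter fun a : α × α => a.1 = v).card) := fun v => (heven v).1
  have hie : ∀ v : α, Even ((D.filter fun a : α × α => a.2 = v).card) := fun v => (heven v).2
  choose fσ hfσ using fun v : α => pairing_aux (D.filter fun a : α × α => a.1 = v) (hoe v)
  choose fτ hfτ using fun v : α => pairing_aux (D.filter fun a : α × α => a.2 = v) (hie v)
  set σ : α × α → α × α := fun e => fσ e.1 e with hσdef
  set τ : α × α → α × α := fun e => fτ e.2 e with hτdef
  have hσ : ∀ e ∈ D, σ e ∈ D ∧ (σ e).1 = e.1 ∧ σ e ≠ e ∧ σ (σ e) = e := by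
    intro e he
    have he' : e ∈ D.filter (fun a => a.1 = e.1) := by simp [he]
    obtain ⟨h1, h2, h3⟩ := hfσ e.1 e he'
    rw [Finset.mem_filter] at h1
    refine ⟨h1.1, h1.2, h2, ?_⟩
    show fσ (σ e).1 (σ e) = e
    rw [show (σ e).1 = e.1 from h1.2]
    exact h3
  have hτ : ∀ e ∈ D, τ e ∈ D ∧ (τ e).2 = e.2 ∧ τ e ≠ e ∧ τ (τ e) = e := by
    intro e he
    have he' : e ∈ D.filter (fun a => a.2 = e.2) := by simp [he]
    obtain ⟨h1, h2, h3⟩ := hfτ e.2 e he'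
    rw [Finset.mem_filter] at h1
    refine ⟨h1.1, h1.2, h2, ?_⟩
    show fτ (τ e).2 (τ e) = e
    rw [show (τ e).2 = e.2 from h1.2]
    exact h3
  have hστ : ∀ e ∈ D, σ e ≠ τ e := by
    intro e he heq
    have h1 := hσ e he
    have h2 := hτ e he
    have : σ e = e := Prod.ext h1.2.1 (by rw [heq]; exact h2.2.1)
    exact h1.2.2.1 this
  set g : α × α → α × α := fun e => τ (σ e) with hgdef
  have hgmem : ∀ e ∈ D, g e ∈ D := fun e he => (hτ _ (hσ e he).1).1
  have hginj : ∀ a ∈ D, ∀ b ∈ D, g a = g b → a = b := by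
    intro a ha b hb hab
    have h2 : σ a = σ b := by
      have h := congrArg τ hab
      rwa [(hτ _ (hσ a ha).1).2.2.2, (hτ _ (hσ b hb).1).2.2.2] at h
    have h3 := congrArg σ h2
    rwa [(hσ a ha).2.2.2, (hσ b hb).2.2.2] at h3
  have hOmem : ∀ k, g^[k] e0 ∈ D := by
    intro k
    induction k with
    | zero => exact he0
    | succ k ih => rw [Function.iterate_succ_apply']; exact hgmem _ ih
  have hcancel : ∀ (k : ℕ) (a b : α × α), a ∈ D → b ∈ D → g^[k] a = g^[k] b → a = b := by
    intro k
    induction k with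
    | zero => intro a b _ _ h; exact h
    | succ k ih =>
      intro a b ha hb h
      rw [Function.iterate_succ_apply, Function.iterate_succ_apply] at h
      exact hginj a ha b hb (ih _ _ (hgmem a ha) (hgmem b hb) h)
  have hex : ∃ d, 0 < d ∧ g^[d] e0 = e0 := by
    have hni : ¬ Function.Injective
        (fun k : Fin (D.card + 1) => (⟨g^[(k : ℕ)] e0, hOmem k⟩ : {x // x ∈ D})) := by
      intro hinj
      have := Fintype.card_le_of_injective _ hinj
      simp [Fintype.card_coe] at this
    rw [Function.not_injective_iff] at hni
    obtain ⟨i, j, hij, hne'⟩ := hni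
    have hij' : g^[(i : ℕ)] e0 = g^[(j : ℕ)] e0 := congrArg Subtype.val hij
    have key : ∀ i j : ℕ, i < j → g^[i] e0 = g^[j] e0 → ∃ d, 0 < d ∧ g^[d] e0 = e0 := by
      intro i j hlt heq
      refine ⟨j - i, by omega, ?_⟩
      have h1 : g^[i] (g^[j - i] e0) = g^[j] e0 := by
        rw [← Function.iterate_add_apply, show i + (j - i) = j by omega]
      exact hcancel i _ _ (hOmem _) he0 (h1.trans heq.symm)
    rcases Nat.lt_trichotomy (i : ℕ) (j : ℕ) with h | h | h
    · exact key _ _ h hij'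
    · exact absurd (Fin.ext h) hne'
    · exact key _ _ h hij'.symm
  obtain ⟨hm0, hmspec⟩ := Nat.find_spec hex
  set m := Nat.find hex with hmdef
  -- the alternating sequence of arcs
  set E : ℕ → α × α := fun k => Nat.rec e0 (fun n ih => if Even n then σ ih else τ ih) k
    with hEdef
  have hE0 : E 0 = e0 := rfl
  have hEs : ∀ k, E (k + 1) = if Even k then σ (E k) else τ (E k) := fun k => rfl
  have hEmem : ∀ k, E k ∈ D := by
    intro k
    induction k with
    | zero => exact he0
    | succ k ih =>
      rw [hEs]
      split
      · exact (hσ _ ih).1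
      · exact (hτ _ ih).1
  have hEne : ∀ k, E (k + 1) ≠ E k := by
    intro k
    rw [hEs]
    split
    · exact (hσ _ (hEmem k)).2.2.1
    · exact (hτ _ (hEmem k)).2.2.1
  have hEeven : ∀ k, E (2 * k) = g^[k] e0 := by
    intro k
    induction k with
    | zero => exact hE0
    | succ k ih =>
      have h1 : 2 * (k + 1) = 2 * k + 1 + 1 := by ring
      rw [h1, hEs, if_neg (by simp [Nat.even_add_one, parity_simps]), hEs,
        if_pos (even_two_mul k), ih, Function.iterate_succ_apply']
  have hEper : ∀ k, E (k + 2 * m) = E k := by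
    intro k
    induction k with
    | zero =>
      rw [Nat.zero_add, hEeven m, hmspec, hE0]
    | succ k ih =>
      have hpar : Even (k + 2 * m) ↔ Even k := by simp [Nat.even_add]
      rw [show k + 1 + 2 * m = (k + 2 * m) + 1 by omega, hEs, ih, hEs k]
      by_cases h : Even k
      · rw [if_pos (hpar.mpr h), if_pos h]
      · rw [if_neg (fun hh => h (hpar.mp hh)), if_neg h]
  have hEperN : ∀ (N k : ℕ), E (k + 2 * m * N) = E k := by
    intro N
    induction N with
    | zero => intro k; simp
    | succ N ih =>
      intro k
      rw [show k + 2 * m * (N + 1) = (k + 2 * m * N) + 2 * m by ring, hEper, ih]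
  have hEmod : ∀ k, E (k % (2 * m)) = E k := by
    intro k
    conv_rhs => rw [show k = k % (2 * m) + 2 * m * (k / (2 * m)) from (Nat.mod_add_div k (2 * m)).symm]
    rw [hEperN]
  -- no collisions of mixed parity : palindrome argument
  have hpal : ∀ a b, Even a → ¬ Even b → a < b → E a = E b → False := by
    intro a b hea heb hab heq
    have key : ∀ k, k ≤ b - a → E (a + k) = E (b - k) := by
      intro k
      induction k with
      | zero => simpa using heq
      | succ k ih =>
        intro hk
        have H := ih (by omega)
        have hbk : k + 1 ≤ b := by omega
        by_cases h : Even k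
        · have hak : Even (a + k) := by
            rw [Nat.even_iff] at *; omega
          have hbk1 : Even (b - (k + 1)) := by
            rw [Nat.even_iff] at *; omega
          have h2 : E (b - k) = σ (E (b - (k + 1))) := by
            rw [show b - k = (b - (k + 1)) + 1 by omega, hEs, if_pos hbk1]
          calc E (a + (k + 1)) = σ (E (a + k)) := by
                rw [show a + (k + 1) = (a + k) + 1 by omega, hEs, if_pos hak]
            _ = σ (E (b - k)) := by rw [H]
            _ = σ (σ (E (b - (k + 1)))) := by rw [h2]
            _ = E (b - (k + 1)) := (hσ _ (hEmem _)).2.2.2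
        · have hak : ¬ Even (a + k) := by
            rw [Nat.even_iff] at *; omega
          have hbk1 : ¬ Even (b - (k + 1)) := by
            rw [Nat.even_iff] at *; omega
          have h2 : E (b - k) = τ (E (b - (k + 1))) := by
            rw [show b - k = (b - (k + 1)) + 1 by omega, hEs, if_neg hbk1]
          calc E (a + (k + 1)) = τ (E (a + k)) := by
                rw [show a + (k + 1) = (a + k) + 1 by omega, hEs, if_neg hak]
            _ = τ (E (b - k)) := by rw [H]
            _ = τ (τ (E (b - (k + 1)))) := by rw [h2]
            _ = E (b - (k + 1)) := (hτ _ (hEmem _)).2.2.2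
    set k := (b - a - 1) / 2 with hk
    have h1 : k ≤ b - a := by omega
    have h2 : b - k = a + k + 1 := by
      rw [Nat.even_iff] at hea heb; omega
    have := key k h1
    rw [h2] at this
    exact hEne (a + k) this.symm
  have hmix : ∀ a b, Even a → ¬ Even b → E a ≠ E b := by
    intro a b ha hb heq
    have ht : Even (2 * m * (a + 1)) := ⟨m * (a + 1), by ring⟩
    have ht2 : 2 * (a + 1) ≤ 2 * m * (a + 1) :=
      Nat.mul_le_mul_right (a + 1) (by omega)
    have hEb' : E (b + 2 * m * (a + 1)) = E b := hEperN (a + 1) b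
    have hlt : a < b + 2 * m * (a + 1) := by
      obtain ⟨c, hc⟩ := ht; omega
    have hpar : ¬ Even (b + 2 * m * (a + 1)) := by
      obtain ⟨c, hc⟩ := ht
      rw [Nat.even_iff] at *
      omega
    exact hpal a _ ha hpar hlt (heq.trans hEb'.symm)
  -- injectivity on [0, 2m)
  have hgorb : ∀ a b : ℕ, a < m → b < m → g^[a] e0 = g^[b] e0 → a = b := by
    have key : ∀ a b : ℕ, a < b → b < m → g^[a] e0 = g^[b] e0 → False := by
      intro a b hab hbm heq
      have h1 : g^[a] (g^[b - a] e0) = g^[b] e0 := by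
        rw [← Function.iterate_add_apply, show a + (b - a) = b by omega]
      have h2 : g^[b - a] e0 = e0 :=
        hcancel a _ _ (hOmem _) he0 (h1.trans heq.symm)
      exact Nat.find_min hex (show b - a < m by omega) ⟨by omega, h2⟩
    intro a b ha hb heq
    rcases Nat.lt_trichotomy a b with h | h | h
    · exact absurd heq (fun hh => key a b h hb hh)
    · exact h
    · exact absurd heq.symm (fun hh => key b a h ha hh)
  have hinj : ∀ i j, i < 2 * m → j < 2 * m → E i = E j → i = j := by
    have keyE : ∀ i j, Even i → Even j → i < 2 * m → j < 2 * m → E i = E j → i = j := by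
      intro i j hi hj hi2 hj2 heq
      obtain ⟨a, ha⟩ := hi
      obtain ⟨b, hb⟩ := hj
      rw [show i = 2 * a by omega, hEeven] at heq
      rw [show j = 2 * b by omega, hEeven] at heq
      have := hgorb a b (by omega) (by omega) heq
      omega
    intro i j hi hj heq
    by_cases hpi : Even i <;> by_cases hpj : Even j
    · exact keyE i j hpi hpj hi hj heq
    · exact absurd heq (hmix i j hpi hpj)
    · exact absurd heq.symm (hmix j i hpj hpi)
    · -- both odd
      rw [Nat.even_iff] at hpi hpj
      obtain ⟨i, rfl⟩ : ∃ i', i = i' + 1 := ⟨i - 1, by omega⟩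
      obtain ⟨j, rfl⟩ : ∃ j', j = j' + 1 := ⟨j - 1, by omega⟩
      have hpi' : Even i := by rw [Nat.even_iff]; omega
      have hpj' : Even j := by rw [Nat.even_iff]; omega
      rw [hEs, if_pos hpi', hEs, if_pos hpj'] at heq
      have h1 : E i = E j := by
        have := congrArg σ heq
        rwa [(hσ _ (hEmem i)).2.2.2, (hσ _ (hEmem j)).2.2.2] at this
      have := keyE i j hpi' hpj' (by omega) (by omega) h1
      omega
  -- assemble the trail
  haveI : NeZero (2 * m) := ⟨by omega⟩
  haveI : Fact (1 < 2 * m) := ⟨by omega⟩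
  have hone : (1 : ZMod (2 * m)).val = 1 := ZMod.val_one (2 * m)
  have hval : ∀ i : ZMod (2 * m), E ((i + 1).val) = E (i.val + 1) := by
    intro i
    rw [ZMod.val_add, hone, hEmod]
  have hparval : ∀ i : ZMod (2 * m), (Even ((i + 1).val) ↔ Even (i.val + 1)) := by
    intro i
    rw [ZMod.val_add, hone, Nat.even_iff, Nat.even_iff,
      Nat.mod_mod_of_dvd _ (⟨m, rfl⟩ : 2 ∣ 2 * m)]
  refine ⟨m, hm0, fun i => E i.val,
    fun i => if Even i.val then (E i.val).1 else (E i.val).2, ?_, ?_, ?_, ?_⟩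
  · intro i j h
    exact ZMod.val_injective (2 * m)
      (hinj i.val j.val (ZMod.val_lt i) (ZMod.val_lt j) h)
  · intro i
    exact hEmem _
  · intro i
    show SameDir (E i.val) (E ((i + 1).val)) (if Even i.val then (E i.val).1 else (E i.val).2)
    rw [hval]
    by_cases h : Even i.val
    · rw [if_pos h]
      refine Or.inl ⟨rfl, ?_⟩
      rw [hEs, if_pos h]
      exact (hσ _ (hEmem _)).2.1
    · rw [if_neg h]
      refine Or.inr ⟨rfl, ?_⟩
      rw [hEs, if_neg h]
      exact (hτ _ (hEmem _)).2.1
  · intro i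
    show (if Even i.val then (E i.val).1 else (E i.val).2) ≠
      (if Even ((i + 1).val) then (E ((i + 1).val)).1 else (E ((i + 1).val)).2)
    rw [hval]
    by_cases h : Even i.val
    · have h3 : ¬ Even (i.val + 1) := by simp [Nat.even_add_one, h]
      rw [if_pos h, if_neg (fun hh => h3 ((hparval i).mp hh)), hEs, if_pos h]
      have hh := hσ _ (hEmem i.val)
      rw [← hh.2.1]
      exact (hor _ hh.1).1
    · have h3 : Even (i.val + 1) := by simpa [Nat.even_add_one] using h
      rw [if_neg h, if_pos ((hparval i).mpr h3), hEs, if_neg h]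
      have hh := hτ _ (hEmem i.val)
      rw [← hh.2.1]
      exact fun he => (hor _ hh.1).1 he.symm
end

section
/- Let D be a Bernstein orientation of a graph G (i.e., an orientation with no directed cycle and no alternating closed trail), and let (R,B) be any partition of the arcs of D into two colour classes. Then the configuration (R,B) is recoverable: there is no other partition (R',B') of an orientation of G with the same degree function. -/
variable {α : Type*}

section AuxLemmas
set_option linter.unusedSectionVars false

variable [DecidableEq α]


lemma outDeg_union (s t : Finset (α × α)) (h : Disjoint s t) (v : α) :
    outDeg (s ∪ t) v = outDeg s v + outDeg t v := by
  unfold outDeg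
  rw [Finset.filter_union, Finset.card_union_of_disjoint (Finset.disjoint_filter_filter h)]

lemma inDeg_union (s t : Finset (α × α)) (h : Disjoint s t) (v : α) :
    inDeg (s ∪ t) v = inDeg s v + inDeg t v := by
  unfold inDeg
  rw [Finset.filter_union, Finset.card_union_of_disjoint (Finset.disjoint_filter_filter h)]

lemma outDeg_filter_split (s : Finset (α × α)) (p : α × α → Prop) [DecidablePred p] (v : α) :
    outDeg s v = outDeg (s.filter p) v + outDeg (s.filter fun a => ¬ p a) v := by
  conv_lhs => rw [← Finset.filter_union_filter_not_eq p s]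
  exact outDeg_union _ _ (Finset.disjoint_filter_filter_not s s p) v

lemma outDeg_pos_iff (s : Finset (α × α)) (v : α) : 0 < outDeg s v ↔ ∃ a ∈ s, a.1 = v := by
  unfold outDeg; rw [Finset.card_pos, Finset.filter_nonempty_iff]

lemma hasDirCycle_mono {S D : Finset (α × α)} (h : S ⊆ D) : HasDirCycle S → HasDirCycle D :=
  fun ⟨v, hv⟩ => ⟨v, Relation.TransGen.mono (fun _ _ hab => h hab) _ _ hv⟩

lemma hasDirCycle_of_balanced (S : Finset (α × α)) (hne : S.Nonempty)
    (hbal : ∀ v, outDeg S v = inDeg S v) : HasDirCycle S := by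
  classical
  set T := S.image Prod.snd with hT
  have hstep : ∀ v, v ∈ T → ∃ w, (v, w) ∈ S ∧ w ∈ T := by
    intro v hv
    have hin : 0 < inDeg S v := by
      rw [inDeg, Finset.card_pos, Finset.filter_nonempty_iff]
      obtain ⟨a, ha, h2⟩ := Finset.mem_image.1 hv
      exact ⟨a, ha, h2⟩
    have hout : 0 < outDeg S v := by rw [hbal]; exact hin
    rw [outDeg, Finset.card_pos, Finset.filter_nonempty_iff] at hout
    obtain ⟨a, ha, h1⟩ := hout
    refine ⟨a.2, ?_, Finset.mem_image.2 ⟨a, ha, rfl⟩⟩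
    rw [← h1]
    exact ha
  obtain ⟨a0, ha0⟩ := hne
  let f : {v // v ∈ T} → {v // v ∈ T} := fun x =>
    ⟨(hstep x.1 x.2).choose, (hstep x.1 x.2).choose_spec.2⟩
  have hf : ∀ x : {v // v ∈ T}, (x.1, (f x).1) ∈ S := fun x => (hstep x.1 x.2).choose_spec.1
  let x0 : {v // v ∈ T} := ⟨a0.2, Finset.mem_image.2 ⟨a0, ha0, rfl⟩⟩
  have hchain : ∀ i j : ℕ, i < j →
      Relation.TransGen (fun a b => (a, b) ∈ S) (f^[i] x0).1 (f^[j] x0).1 := by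
    intro i j hij
    induction j with
    | zero => omega
    | succ j ih =>
      rcases Nat.lt_succ_iff_lt_or_eq.1 hij with h | h
      · refine (ih h).tail ?_
        rw [Function.iterate_succ_apply']
        exact hf _
      · subst h
        rw [Function.iterate_succ_apply']
        exact Relation.TransGen.single (hf _)
  obtain ⟨i, j, hij, heq⟩ := Finite.exists_ne_map_eq_of_infinite (fun k : ℕ => f^[k] x0)
  rcases hij.lt_or_gt with h | h
  · exact ⟨(f^[i] x0).1, by have := hchain i j h; rw [heq] at this ⊢; exact this⟩
  · exact ⟨(f^[j] x0).1, by have := hchain j i h; rw [heq] at this; exact this⟩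

def evv (a : α × α) (b : Bool) : α := if b then a.2 else a.1

lemma evv_false (a : α × α) : evv a false = a.1 := rfl

lemma evv_true (a : α × α) : evv a true = a.2 := rfl

def Aset (P : Finset (α × α)) (w : α) (b : Bool) : Finset (α × α) :=
  P.filter fun a => evv a b = w

lemma mem_Aset {P : Finset (α × α)} {w : α} {b : Bool} {a : α × α} :
    a ∈ Aset P w b ↔ a ∈ P ∧ evv a b = w := Finset.mem_filter

def arcOf (P Q : Finset (α × α)) : ({a // a ∈ P} ⊕ {a // a ∈ Q}) × Bool → α × α :=
  fun x => Sum.elim Subtype.val Subtype.val x.1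

def rhoFun {β : Type*} : β × Bool → β × Bool := fun x => (x.1, !x.2)

section Sigma
variable [DecidableEq α] (P Q : Finset (α × α))
  (Φ : ∀ (w : α) (b : Bool), {a // a ∈ Aset P w b} ≃ {a // a ∈ Aset Q w b})

def sigmaFun : (({a // a ∈ P} ⊕ {a // a ∈ Q}) × Bool) → (({a // a ∈ P} ⊕ {a // a ∈ Q}) × Bool)
  | (Sum.inl e, b) =>
      (Sum.inr ⟨(Φ (evv e.1 b) b ⟨e.1, mem_Aset.2 ⟨e.2, rfl⟩⟩).1,
        (mem_Aset.1 (Φ (evv e.1 b) b ⟨e.1, mem_Aset.2 ⟨e.2, rfl⟩⟩).2).1⟩, !b)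
  | (Sum.inr f, b) =>
      (Sum.inl ⟨((Φ (evv f.1 b) b).symm ⟨f.1, mem_Aset.2 ⟨f.2, rfl⟩⟩).1,
        (mem_Aset.1 ((Φ (evv f.1 b) b).symm ⟨f.1, mem_Aset.2 ⟨f.2, rfl⟩⟩).2).1⟩, !b)

lemma sigma_flag (x) : (sigmaFun P Q Φ x).2 = !x.2 := by
  rcases x with ⟨e | f, b⟩ <;> rfl

lemma sigma_isLeft (x) : (sigmaFun P Q Φ x).1.isLeft = !x.1.isLeft := by
  rcases x with ⟨e | f, b⟩ <;> rfl

lemma arcOf_mem (x) : arcOf P Q x ∈ P ∪ Q := by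
  rcases x with ⟨e | f, b⟩
  · exact Finset.mem_union_left _ e.2
  · exact Finset.mem_union_right _ f.2

lemma sigma_evv (x) : evv (arcOf P Q (sigmaFun P Q Φ x)) x.2 = evv (arcOf P Q x) x.2 := by
  rcases x with ⟨e | f, b⟩
  · exact (mem_Aset.1 (Φ (evv e.1 b) b ⟨e.1, mem_Aset.2 ⟨e.2, rfl⟩⟩).2).2
  · exact (mem_Aset.1 ((Φ (evv f.1 b) b).symm ⟨f.1, mem_Aset.2 ⟨f.2, rfl⟩⟩).2).2

lemma symm_val_congr {w w' : α} {b : Bool} (h : w = w')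
    (y : {a // a ∈ Aset Q w b}) (y' : {a // a ∈ Aset Q w' b}) (hyy : y.1 = y'.1) :
    ((Φ w b).symm y).1 = ((Φ w' b).symm y').1 := by
  subst h
  cases Subtype.ext hyy
  rfl

lemma app_val_congr {w w' : α} {b : Bool} (h : w = w')
    (y : {a // a ∈ Aset P w b}) (y' : {a // a ∈ Aset P w' b}) (hyy : y.1 = y'.1) :
    ((Φ w b) y).1 = ((Φ w' b) y').1 := by
  subst h
  cases Subtype.ext hyy
  rfl

lemma sigma_rho_sigma (x) :
    sigmaFun P Q Φ (rhoFun (sigmaFun P Q Φ x)) = rhoFun x := by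
  rcases x with ⟨e | f, b⟩
  · have hE : e.1 ∈ Aset P (evv e.1 b) b := mem_Aset.2 ⟨e.2, rfl⟩
    have hq : evv (Φ (evv e.1 b) b ⟨e.1, hE⟩).1 b = evv e.1 b :=
      (mem_Aset.1 (Φ (evv e.1 b) b ⟨e.1, hE⟩).2).2
    simp only [sigmaFun, rhoFun, Bool.not_not]
    refine Prod.ext (congrArg Sum.inl (Subtype.ext ?_)) rfl
    refine (symm_val_congr P Q Φ hq _ (Φ (evv e.1 b) b ⟨e.1, hE⟩) rfl).trans ?_
    exact congrArg Subtype.val (Equiv.symm_apply_apply (Φ (evv e.1 b) b) ⟨e.1, hE⟩)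
  · have hF : f.1 ∈ Aset Q (evv f.1 b) b := mem_Aset.2 ⟨f.2, rfl⟩
    have hq : evv ((Φ (evv f.1 b) b).symm ⟨f.1, hF⟩).1 b = evv f.1 b :=
      (mem_Aset.1 ((Φ (evv f.1 b) b).symm ⟨f.1, hF⟩).2).2
    simp only [sigmaFun, rhoFun, Bool.not_not]
    refine Prod.ext (congrArg Sum.inr (Subtype.ext ?_)) rfl
    refine (app_val_congr P Q Φ hq _ ((Φ (evv f.1 b) b).symm ⟨f.1, hF⟩) rfl).trans ?_
    exact congrArg Subtype.val (Equiv.apply_symm_apply (Φ (evv f.1 b) b) ⟨f.1, hF⟩)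

lemma sigma_inj : Function.Injective (sigmaFun P Q Φ) := by
  have h : Function.LeftInverse (fun x => rhoFun (sigmaFun P Q Φ (rhoFun x))) (sigmaFun P Q Φ) := by
    intro x
    show rhoFun (sigmaFun P Q Φ (rhoFun (sigmaFun P Q Φ x))) = x
    rw [sigma_rho_sigma]
    rcases x with ⟨s, b⟩
    simp [rhoFun]
  exact h.injective

end Sigma

lemma hasAltTrail_mono {S D : Finset (α × α)} (h : S ⊆ D) : HasAltTrail S → HasAltTrail D := by
  rintro ⟨m, hm, e, v, h1, h2, h3, h4⟩
  exact ⟨m, hm, e, v, h1, fun i => h (h2 i), h3, h4⟩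

lemma outDeg_eq_card (s : Finset (α × α)) (v : α) :
    (s.filter fun a => a.1 = v).card = (s.filter fun a => evv a false = v).card := by
  simp [evv]

lemma hasAltTrail_of_balanced (P Q : Finset (α × α)) (hPQ : Disjoint P Q)
    (hne : P.Nonempty) (hsimple : ∀ a ∈ P ∪ Q, a.1 ≠ a.2)
    (hbal : ∀ v, (P.filter fun a => a.1 = v).card = (Q.filter fun a => a.1 = v).card ∧
      (P.filter fun a => a.2 = v).card = (Q.filter fun a => a.2 = v).card) :
    HasAltTrail (P ∪ Q) := by
  classical
  have hcard : ∀ (w : α) (b : Bool), (Aset P w b).card = (Aset Q w b).card := by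
    intro w b
    cases b
    · have h1 : Aset P w false = P.filter (fun a => a.1 = w) := by simp [Aset, evv]
      have h2 : Aset Q w false = Q.filter (fun a => a.1 = w) := by simp [Aset, evv]
      rw [h1, h2]; exact (hbal w).1
    · have h1 : Aset P w true = P.filter (fun a => a.2 = w) := by simp [Aset, evv]
      have h2 : Aset Q w true = Q.filter (fun a => a.2 = w) := by simp [Aset, evv]
      rw [h1, h2]; exact (hbal w).2
  let Φ : ∀ (w : α) (b : Bool), {a // a ∈ Aset P w b} ≃ {a // a ∈ Aset Q w b} :=
    fun w b => Finset.equivOfCardEq (hcard w b)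
  set σ := sigmaFun P Q Φ with hσdef
  have hinj : Function.Injective σ := sigma_inj P Q Φ
  -- a periodic point
  obtain ⟨a0, ha0⟩ := hne
  set y0 : ({a // a ∈ P} ⊕ {a // a ∈ Q}) × Bool := (Sum.inl ⟨a0, ha0⟩, true) with hy0
  obtain ⟨i0, j0, hij0, heq0⟩ := Finite.exists_ne_map_eq_of_infinite (fun k : ℕ => σ^[k] y0)
  have hper0 : ∃ y n, 0 < n ∧ σ^[n] y = y := by
    have key : ∀ i j : ℕ, i < j → σ^[i] y0 = σ^[j] y0 → ∃ y n, 0 < n ∧ σ^[n] y = y := by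
      intro i j hij heq
      refine ⟨σ^[i] y0, j - i, by omega, ?_⟩
      rw [← Function.iterate_add_apply, show j - i + i = j by omega]
      exact heq.symm
    rcases hij0.lt_or_gt with h | h
    · exact key i0 j0 h heq0
    · exact key j0 i0 h heq0.symm
  obtain ⟨y, n1, hn1, hyn1⟩ := hper0
  have hPd : ∃ n, 0 < n ∧ σ^[n] y = y := ⟨n1, hn1, hyn1⟩
  set n := Nat.find hPd with hndef
  have hpos : 0 < n := (Nat.find_spec hPd).1
  have hper : σ^[n] y = y := (Nat.find_spec hPd).2
  have hmin : ∀ k, 0 < k → k < n → σ^[k] y ≠ y := by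
    intro k hk1 hk2 hk3
    exact Nat.find_min hPd hk2 ⟨hk1, hk3⟩
  -- flag parity
  have hflag : ∀ (k : ℕ) (x), (σ^[k] x).2 = if Even k then x.2 else !x.2 := by
    intro k
    induction k with
    | zero => intro x; simp
    | succ k ih =>
      intro x
      rw [Function.iterate_succ_apply', hσdef, sigma_flag P Q Φ, ← hσdef, ih]
      rcases Nat.even_or_odd k with h | h
      · simp [h, Nat.even_add_one]
      · simp [Nat.even_add_one, (Nat.not_even_iff_odd.2 h)]
  have hneven : Even n := by
    by_contra hodd
    have h := hflag n y
    rw [hper, if_neg hodd] at h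
    simp at h
  obtain ⟨m, hm⟩ := hneven
  have hm0 : 0 < m := by omega
  have h2m : 2 * m = n := by omega
  clear hndef
  clear_value n
  subst h2m
  -- distinctness within one period
  have hiterinj : ∀ k : ℕ, Function.Injective (σ^[k]) := fun k => hinj.iterate k
  have hdistinct : ∀ i j, i < (2*m) → j < (2*m) → σ^[i] y = σ^[j] y → i = j := by
    intro i j hi hj hEq
    by_contra hne'
    wlog h : i < j generalizing i j
    · exact this j i hj hi hEq.symm (Ne.symm hne') (by omega)
    have h1 : σ^[i] (σ^[j - i] y) = σ^[i] y := by
      rw [← Function.iterate_add_apply, show i + (j - i) = j by omega]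
      exact hEq.symm
    exact hmin (j - i) (by omega) (by omega) (hiterinj i h1)
  -- iterated rho identity
  have hI : ∀ (k : ℕ) (x), σ^[k] (rhoFun (σ^[k] x)) = rhoFun x := by
    intro k
    induction k with
    | zero => intro x; rfl
    | succ k ih =>
      intro x
      have e1 : σ^[k+1] x = σ^[k] (σ x) := Function.iterate_succ_apply σ k x
      have e2 : ∀ z, σ^[k+1] z = σ (σ^[k] z) := fun z => Function.iterate_succ_apply' σ k z
      rw [e1, e2, ih (σ x), hσdef, sigma_rho_sigma P Q Φ]
  -- no reversal in an orbit
  have hnorho : ∀ t k, 0 < k → σ^[k] t = rhoFun t → False := by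
    intro t k hk hkt
    have hkodd : ¬ Even k := by
      intro hke
      have h := hflag k t
      rw [hkt, if_pos hke] at h
      rcases t with ⟨s, b⟩
      simp [rhoFun] at h
    obtain ⟨l, hl⟩ := Nat.not_even_iff_odd.1 hkodd
    have h1 : σ^[l] (rhoFun (σ^[l] (σ^[l+1] t))) = rhoFun (σ^[l+1] t) := hI l _
    have h2 : σ^[l] (σ^[l+1] t) = rhoFun t := by
      rw [← Function.iterate_add_apply, show l + (l + 1) = k by omega]
      exact hkt
    have h3 : rhoFun (rhoFun t) = t := by rcases t with ⟨s, b⟩; simp [rhoFun]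
    rw [h2, h3] at h1
    -- h1 : σ^[l] t = rhoFun (σ^[l+1] t)
    rw [Function.iterate_succ_apply' (f := σ)] at h1
    have h6 : (σ^[l] t).1 = (σ (σ^[l] t)).1 := by
      have := congrArg Prod.fst h1
      simpa [rhoFun] using this
    have h5 : (σ (σ^[l] t)).1.isLeft = !(σ^[l] t).1.isLeft := sigma_isLeft P Q Φ _
    rw [← h6] at h5
    cases hx : (σ^[l] t).1 <;> simp [hx] at h5
  -- arcs determine traversal up to rho
  have harc_eq : ∀ x z, arcOf P Q x = arcOf P Q z → x ≠ z → z = rhoFun x := by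
    intro x z hxz hne'
    rcases x with ⟨e | e, b⟩ <;> rcases z with ⟨f | f, b'⟩
    · have h : e.1 = f.1 := hxz
      have hef : e = f := Subtype.ext h
      subst hef
      have hbb : b' = !b := by
        cases b <;> cases b' <;> first | rfl | exact absurd rfl hne'
      rw [hbb]; rfl
    · have h : e.1 = f.1 := hxz
      exact absurd (show e.1 ∈ Q by rw [h]; exact f.2) (Finset.disjoint_left.1 hPQ e.2)
    · have h : e.1 = f.1 := hxz
      exact absurd (show e.1 ∈ P by rw [h]; exact f.2) (Finset.disjoint_right.1 hPQ e.2)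
    · have h : e.1 = f.1 := hxz
      have hef : e = f := Subtype.ext h
      subst hef
      have hbb : b' = !b := by
        cases b <;> cases b' <;> first | rfl | exact absurd rfl hne'
      rw [hbb]; rfl
  have hinjarc : ∀ i j, i < (2*m) → j < (2*m) → arcOf P Q (σ^[i] y) = arcOf P Q (σ^[j] y) → i = j := by
    intro i j hi hj hEq
    by_contra hne'
    have hxz : σ^[i] y ≠ σ^[j] y := fun hc => hne' (hdistinct i j hi hj hc)
    have hz : σ^[j] y = rhoFun (σ^[i] y) := harc_eq _ _ hEq hxz
    rcases le_or_gt i j with h | h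
    · have hk : σ^[j - i] (σ^[i] y) = rhoFun (σ^[i] y) := by
        rw [← Function.iterate_add_apply, show j - i + i = j by omega]
        exact hz
      exact hnorho _ (j - i) (by omega) hk
    · have hk : σ^[j + (2*m) - i] (σ^[i] y) = rhoFun (σ^[i] y) := by
        rw [← Function.iterate_add_apply, show j + (2*m) - i + i = j + (2*m) by omega,
          Function.iterate_add_apply, hper]
        exact hz
      exact hnorho _ (j + (2*m) - i) (by omega) hk
  -- mod-(2*m) reduction
  have hmod : ∀ j : ℕ, σ^[j % (2*m)] y = σ^[j] y := by
    intro j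
    conv_rhs => rw [← Nat.mod_add_div j (2*m), Function.iterate_add_apply]
    congr 1
    rw [Function.iterate_mul]
    exact (Function.iterate_fixed hper (j / (2*m))).symm
  haveI : NeZero (2 * m) := ⟨by omega⟩
  haveI : Fact (1 < 2 * m) := ⟨by omega⟩
  have hsucc : ∀ i : ZMod (2 * m), σ^[(i + 1).val] y = σ (σ^[i.val] y) := by
    intro i
    rw [ZMod.val_add, ZMod.val_one, hmod (i.val + 1)]
    exact Function.iterate_succ_apply' σ i.val y
  have hsame : ∀ x, SameDir (arcOf P Q x) (arcOf P Q (σ x)) (evv (arcOf P Q x) x.2) := by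
    rintro ⟨s, b⟩
    have h3 := sigma_evv P Q Φ (s, b)
    cases b
    · left
      rw [evv_false] at h3 ⊢
      exact ⟨rfl, h3⟩
    · right
      rw [evv_true] at h3 ⊢
      exact ⟨rfl, h3⟩
  have hvne : ∀ x, evv (arcOf P Q x) x.2 ≠ evv (arcOf P Q (σ x)) ((σ x).2) := by
    rintro ⟨s, b⟩
    have h3 := sigma_evv P Q Φ (s, b)
    have h4 : (σ (s, b)).2 = !b := sigma_flag P Q Φ (s, b)
    have h5 : (arcOf P Q (σ (s, b))).1 ≠ (arcOf P Q (σ (s, b))).2 :=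
      hsimple _ (arcOf_mem P Q (σ (s, b)))
    rw [h4]
    cases b
    · simp only [evv_false, evv_true, Bool.not_false] at h3 ⊢
      rw [← h3]
      exact h5
    · simp only [evv_false, evv_true, Bool.not_true] at h3 ⊢
      rw [← h3]
      exact h5.symm
  refine ⟨m, hm0, fun i => arcOf P Q (σ^[(ZMod.val i)] y),
    fun i => evv (arcOf P Q (σ^[(ZMod.val i)] y)) ((σ^[(ZMod.val i)] y).2), ?_, ?_, ?_, ?_⟩
  · intro i j h
    have hvals := hinjarc i.val j.val (ZMod.val_lt i) (ZMod.val_lt j) h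
    exact ZMod.val_injective _ hvals
  · intro i
    exact arcOf_mem P Q _
  · intro i
    have := hsame (σ^[i.val] y)
    rwa [← hsucc i] at this
  · intro i
    have := hvne (σ^[i.val] y)
    rwa [← hsucc i] at this

end AuxLemmas

/-- Any red/blue colouring of a Bernstein orientation of `G` is recoverable:
no other coloured orientation of `G` has the same degree function. -/
theorem stmt3 [DecidableEq α] (G : SimpleGraph α) (D R B : Finset (α × α))
    (hD : IsOrientation G D) (hBern : Bernstein D)
    (hRB : R ∪ B = D) (hdisj : Disjoint R B) :
    ∀ D' R' B' : Finset (α × α), IsOrientation G D' → R' ∪ B' = D' →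
      Disjoint R' B' →
      (∀ v : α, outDeg R' v = outDeg R v ∧ inDeg R' v = inDeg R v ∧
        outDeg B' v = outDeg B v ∧ inDeg B' v = inDeg B v) →
      R' = R ∧ B' = B := by
  intro D' R' B' hD' hR'B' hdisj' hdeg
  classical
  -- total out-degrees agree
  have hDeqOut : ∀ v, outDeg D v = outDeg D' v := by
    intro v
    rw [← hRB, ← hR'B', outDeg_union _ _ hdisj, outDeg_union _ _ hdisj',
      (hdeg v).1, (hdeg v).2.2.1]
  -- Step 1 : the set of reversed arcs is empty, hence D' = D
  have hS1 : D.filter (fun a => (a.2, a.1) ∈ D') = ∅ := by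
    by_contra hne0
    have hne1 : (D.filter fun a => (a.2, a.1) ∈ D').Nonempty :=
      Finset.nonempty_iff_ne_empty.2 hne0
    have hbal1 : ∀ v, outDeg (D.filter fun a => (a.2, a.1) ∈ D') v =
        inDeg (D.filter fun a => (a.2, a.1) ∈ D') v := by
      intro v
      have e1 := outDeg_filter_split D (fun a => (a.2, a.1) ∈ D') v
      have e2 := outDeg_filter_split D' (fun a => a ∈ D) v
      have e3 : D.filter (fun a => ¬ (a.2, a.1) ∈ D') = D'.filter (fun a => a ∈ D) := by
        ext a
        simp only [Finset.mem_filter]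
        constructor
        · rintro ⟨haD, hnot⟩
          exact ⟨(hD'.2 a.1 a.2 (hD.1 a haD)).2 hnot, haD⟩
        · rintro ⟨haD', haD⟩
          exact ⟨haD, fun hc => (hD'.2 a.1 a.2 (hD.1 a haD)).1 haD' hc⟩
      have e4 : outDeg (D'.filter fun a => ¬ a ∈ D) v =
          inDeg (D.filter fun a => (a.2, a.1) ∈ D') v := by
        unfold outDeg inDeg
        rw [Finset.filter_filter, Finset.filter_filter]
        refine Finset.card_nbij' Prod.swap Prod.swap ?_ ?_ ?_ ?_
        · intro a ha
          simp only [Finset.mem_coe, Finset.mem_filter] at ha ⊢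
          obtain ⟨haD', hnotD, hav⟩ := ha
          have hAdj := hD'.1 a haD'
          have h1 : (a.2, a.1) ∈ D := by
            by_contra hc
            exact hnotD ((hD.2 a.1 a.2 hAdj).2 (fun hc2 => hc hc2))
          exact ⟨h1, haD', hav⟩
        · intro a ha
          simp only [Finset.mem_coe, Finset.mem_filter] at ha ⊢
          obtain ⟨haD, haswap, hav⟩ := ha
          exact ⟨haswap, (hBern.1 a haD).2, hav⟩
        · intro a _; rfl
        · intro a _; rfl
      have e5 := hDeqOut v
      rw [e1, e2, e3, e4] at e5
      omega
    have hcyc := hasDirCycle_of_balanced _ hne1 hbal1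
    exact hBern.2.1 (hasDirCycle_mono (Finset.filter_subset _ _) hcyc)
  have hDD' : D' = D := by
    apply Finset.Subset.antisymm
    · intro a ha
      by_contra hnot
      have hAdj := hD'.1 a ha
      have h1 : (a.2, a.1) ∈ D := by
        by_contra hc
        exact hnot ((hD.2 a.1 a.2 hAdj).2 hc)
      have h2 : (a.2, a.1) ∈ D.filter (fun b => (b.2, b.1) ∈ D') :=
        Finset.mem_filter.2 ⟨h1, ha⟩
      rw [hS1] at h2
      exact absurd h2 (Finset.notMem_empty _)
    · intro a ha
      by_contra hnot
      have hAdj := hD.1 a ha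
      have h1 : (a.2, a.1) ∈ D' := by
        by_contra hc
        exact hnot ((hD'.2 a.1 a.2 hAdj).2 hc)
      have h2 : a ∈ D.filter (fun b => (b.2, b.1) ∈ D') :=
        Finset.mem_filter.2 ⟨ha, h1⟩
      rw [hS1] at h2
      exact absurd h2 (Finset.notMem_empty _)
  -- Step 2 : colours agree
  have hRD : R ⊆ D := hRB ▸ Finset.subset_union_left
  have hBD : B ⊆ D := hRB ▸ Finset.subset_union_right
  have hR'D : R' ⊆ D := by rw [← hDD']; exact hR'B' ▸ Finset.subset_union_left
  have hB'D : B' ⊆ D := by rw [← hDD']; exact hR'B' ▸ Finset.subset_union_right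
  have hmemD : ∀ a ∈ D, (a ∈ R ∨ a ∈ B) ∧ (a ∈ R' ∨ a ∈ B') := by
    intro a ha
    constructor
    · exact Finset.mem_union.1 (hRB ▸ ha)
    · exact Finset.mem_union.1 (hR'B' ▸ (hDD' ▸ ha : a ∈ D'))
  have hRu : (R ∩ R') ∪ (R ∩ B') = R := by
    ext a
    simp only [Finset.mem_union, Finset.mem_inter]
    constructor
    · rintro (⟨h, _⟩ | ⟨h, _⟩) <;> exact h
    · intro ha
      rcases (hmemD a (hRD ha)).2 with h | h
      · exact Or.inl ⟨ha, h⟩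
      · exact Or.inr ⟨ha, h⟩
  have hR'u : (R' ∩ R) ∪ (R' ∩ B) = R' := by
    ext a
    simp only [Finset.mem_union, Finset.mem_inter]
    constructor
    · rintro (⟨h, _⟩ | ⟨h, _⟩) <;> exact h
    · intro ha
      rcases (hmemD a (hR'D ha)).1 with h | h
      · exact Or.inl ⟨ha, h⟩
      · exact Or.inr ⟨ha, h⟩
  have hd1 : Disjoint (R ∩ R') (R ∩ B') :=
    Disjoint.mono Finset.inter_subset_right Finset.inter_subset_right hdisj'
  have hd2 : Disjoint (R' ∩ R) (R' ∩ B) :=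
    Disjoint.mono Finset.inter_subset_right Finset.inter_subset_right hdisj
  have hbal2 : ∀ v, outDeg (R ∩ B') v = outDeg (R' ∩ B) v ∧
      inDeg (R ∩ B') v = inDeg (R' ∩ B) v := by
    intro v
    have o1 : outDeg (R ∩ R') v + outDeg (R ∩ B') v = outDeg R v := by
      rw [← outDeg_union _ _ hd1, hRu]
    have o2 : outDeg (R' ∩ R) v + outDeg (R' ∩ B) v = outDeg R' v := by
      rw [← outDeg_union _ _ hd2, hR'u]
    have i1 : inDeg (R ∩ R') v + inDeg (R ∩ B') v = inDeg R v := by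
      rw [← inDeg_union _ _ hd1, hRu]
    have i2 : inDeg (R' ∩ R) v + inDeg (R' ∩ B) v = inDeg R' v := by
      rw [← inDeg_union _ _ hd2, hR'u]
    have hcomm : R' ∩ R = R ∩ R' := Finset.inter_comm R' R
    rw [hcomm] at o2 i2
    have ho := (hdeg v).1
    have hi := (hdeg v).2.1
    omega
  have hPQdisj : Disjoint (R ∩ B') (R' ∩ B) :=
    Disjoint.mono Finset.inter_subset_right Finset.inter_subset_left hdisj'.symm
  have hsimple : ∀ a ∈ (R ∩ B') ∪ (R' ∩ B), a.1 ≠ a.2 := by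
    intro a ha
    rcases Finset.mem_union.1 ha with h | h
    · exact (hBern.1 a (hRD (Finset.mem_inter.1 h).1)).1
    · exact (hBern.1 a (hBD (Finset.mem_inter.1 h).2)).1
  have hP : R ∩ B' = ∅ := by
    by_contra hne0
    have hne1 : (R ∩ B').Nonempty := Finset.nonempty_iff_ne_empty.2 hne0
    have htrail := hasAltTrail_of_balanced (R ∩ B') (R' ∩ B) hPQdisj hne1 hsimple
      (fun v => hbal2 v)
    have hsub : (R ∩ B') ∪ (R' ∩ B) ⊆ D := by
      intro a ha
      rcases Finset.mem_union.1 ha with h | h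
      · exact hRD (Finset.mem_inter.1 h).1
      · exact hBD (Finset.mem_inter.1 h).2
    exact hBern.2.2 (hasAltTrail_mono hsub htrail)
  have hQ : R' ∩ B = ∅ := by
    by_contra hne0
    obtain ⟨a, ha⟩ := Finset.nonempty_iff_ne_empty.2 hne0
    have h1 : 0 < outDeg (R' ∩ B) a.1 :=
      (outDeg_pos_iff _ _).2 ⟨a, ha, rfl⟩
    have h2 : 0 < outDeg (R ∩ B') a.1 := by rw [(hbal2 a.1).1]; exact h1
    obtain ⟨b, hb, _⟩ := (outDeg_pos_iff _ _).1 h2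
    rw [hP] at hb
    exact absurd hb (Finset.notMem_empty _)
  constructor
  · ext a
    constructor
    · intro ha
      rcases (hmemD a (hR'D ha)).1 with h | h
      · exact h
      · have : a ∈ R' ∩ B := Finset.mem_inter.2 ⟨ha, h⟩
        rw [hQ] at this
        exact absurd this (Finset.notMem_empty _)
    · intro ha
      rcases (hmemD a (hRD ha)).2 with h | h
      · exact h
      · have : a ∈ R ∩ B' := Finset.mem_inter.2 ⟨ha, h⟩
        rw [hP] at this
        exact absurd this (Finset.notMem_empty _)
  · ext a
    constructor
    · intro ha
      rcases (hmemD a (hB'D ha)).1 with h | h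
      · have : a ∈ R ∩ B' := Finset.mem_inter.2 ⟨h, ha⟩
        rw [hP] at this
        exact absurd this (Finset.notMem_empty _)
      · exact h
    · intro ha
      rcases (hmemD a (hBD ha)).2 with h | h
      · have : a ∈ R' ∩ B := Finset.mem_inter.2 ⟨h, ha⟩
        rw [hQ] at this
        exact absurd this (Finset.notMem_empty _)
      · exact h
end

section
/- Let D be a Bernstein orientation of a graph on vertex set {1,...,n} in which every edge {i,j} with i < j is oriented from i to j. Define the bipartite graph F with vertex set {a_i^+ : 1 ≤ i ≤ n-1} ∪ {a_j^- : 2 ≤ j ≤ n} and an edge {a_i^+, a_j^-} for each arc (i,j) of D. Then F is a forest. -/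
variable {α : Type*}

/-- If `D` is a Bernstein orientation on `Fin n` with every arc going from a
smaller to a larger vertex, then the auxiliary bipartite graph `F`
(with a left copy `a_i⁺` and a right copy `a_j⁻` of the vertices, joined
whenever `(i,j)` is an arc of `D`) is a forest. -/
theorem stmt4 (n : ℕ) (D : Finset (Fin n × Fin n)) (hBern : Bernstein D)
    (hord : ∀ a ∈ D, a.1 < a.2) :
    (SimpleGraph.fromRel (fun x y : Fin n ⊕ Fin n =>
      ∃ i j : Fin n, (i, j) ∈ D ∧ x = Sum.inl i ∧ y = Sum.inr j)).IsAcyclic := by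
  set F := SimpleGraph.fromRel (fun x y : Fin n ⊕ Fin n =>
      ∃ i j : Fin n, (i, j) ∈ D ∧ x = Sum.inl i ∧ y = Sum.inr j) with hF
  intro u p hp
  -- adjacency characterization
  have hadj : ∀ x y : Fin n ⊕ Fin n, F.Adj x y →
      ∃ a : Fin n × Fin n, a ∈ D ∧
        ((x = Sum.inl a.1 ∧ y = Sum.inr a.2) ∨ (x = Sum.inr a.2 ∧ y = Sum.inl a.1)) := by
    intro x y hxy
    rw [hF, SimpleGraph.fromRel_adj] at hxy
    obtain ⟨-, ⟨i, j, hij, hx, hy⟩ | ⟨i, j, hij, hy, hx⟩⟩ := hxy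
    · exact ⟨(i, j), hij, Or.inl ⟨hx, hy⟩⟩
    · exact ⟨(i, j), hij, Or.inr ⟨hx, hy⟩⟩
  -- parity: closed walks have even length
  have hpar : ∀ (x y : Fin n ⊕ Fin n) (q : F.Walk x y),
      (Sum.elim (fun _ => (0 : ZMod 2)) (fun _ => 1) y)
        = Sum.elim (fun _ => (0 : ZMod 2)) (fun _ => 1) x + q.length := by
    intro x y q
    induction q with
    | nil => simp
    | @cons x b y h q ih =>
      rw [SimpleGraph.Walk.length_cons, Nat.cast_add, Nat.cast_one, ih]
      obtain ⟨a, -, ⟨hx, hb⟩ | ⟨hx, hb⟩⟩ := hadj _ _ h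
      · subst hx hb
        simp only [Sum.elim_inl, Sum.elim_inr]
        ring
      · subst hx hb
        simp only [Sum.elim_inl, Sum.elim_inr]
        rw [zero_add, show (1 : ZMod 2) + ((q.length : ZMod 2) + 1) = (q.length : ZMod 2) + 2
          by ring, show (2 : ZMod 2) = 0 by decide, add_zero]
  have heven : Even p.length := by
    have := hpar u u p
    rw [left_eq_add, ZMod.natCast_eq_zero_iff] at this
    exact this.elim fun c hc => ⟨c, by omega⟩
  obtain ⟨m, hm⟩ := heven
  have h3 := hp.three_le_length
  have hm0 : 0 < m := by omega
  have hlen : p.length = 2 * m := by omega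
  haveI : NeZero (2 * m) := ⟨by omega⟩
  have hdlen : p.darts.length = 2 * m := by rw [SimpleGraph.Walk.length_darts, hlen]
  -- the dart sequence indexed by ZMod (2*m)
  set g : ZMod (2 * m) → F.Dart :=
    fun i => p.darts.get ⟨i.val, by rw [hdlen]; exact ZMod.val_lt i⟩ with hg
  have hgeq : ∀ (k : ℕ) (hk : k < p.darts.length) (i : ZMod (2 * m)), i.val = k →
      g i = p.darts.get ⟨k, hk⟩ := by
    intro k hk i hik
    simp only [hg]
    congr 1
    exact Fin.ext hik
  -- consecutive darts share a vertex
  have hcons : ∀ i : ZMod (2 * m), (g i).toProd.2 = (g (i + 1)).toProd.1 := by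
    intro i
    have hchain := List.isChain_iff_getElem.mp p.isChain_dartAdj_darts
    have hival := ZMod.val_lt i
    have hval : (i + 1).val = (i.val + 1) % (2 * m) := by
      rw [ZMod.val_add, ZMod.val_one'' (by omega)]
    rcases Nat.lt_or_ge (i.val + 1) (2 * m) with hlt | hge
    · have hv1 : (i + 1).val = i.val + 1 := by rw [hval, Nat.mod_eq_of_lt hlt]
      have e1 : g i = p.darts.get ⟨i.val, by rw [hdlen]; omega⟩ := hgeq _ _ _ rfl
      have e2 : g (i + 1) = p.darts.get ⟨i.val + 1, by rw [hdlen]; omega⟩ := hgeq _ _ _ hv1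
      rw [e1, e2]
      exact hchain i.val (by rw [hdlen]; omega)
    · have hi : i.val = 2 * m - 1 := by omega
      have hv1 : (i + 1).val = 0 := by
        have h2m : i.val + 1 = 2 * m := by omega
        rw [hval, h2m, Nat.mod_self]
      have hne : p.darts ≠ [] := by
        intro h; rw [h] at hdlen; simp at hdlen; omega
      have e1 : g i = p.darts.get ⟨2 * m - 1, by rw [hdlen]; omega⟩ := hgeq _ _ _ hi
      have e2 : g (i + 1) = p.darts.get ⟨0, by rw [hdlen]; omega⟩ := hgeq _ _ _ hv1
      have h1 : (g i).toProd.2 = u := by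
        have hlast : (p.darts.getLast hne).toProd.2 = u := by
          rw [p.getLast_darts_eq_lastDart hne]; rfl
        rw [List.getLast_eq_getElem] at hlast
        simp only [hdlen] at hlast
        rw [e1, List.get_eq_getElem]
        exact hlast
      have h2 : (g (i + 1)).toProd.1 = u := by
        have hhead : (p.darts.head hne).toProd.1 = u := by
          rw [p.head_darts_eq_firstDart hne]; rfl
        rw [List.head_eq_getElem_zero] at hhead
        rw [e2, List.get_eq_getElem]
        exact hhead
      rw [h1, h2]
  -- extract the arc of each dart
  have hex : ∀ d : F.Dart, ∃ a : Fin n × Fin n, a ∈ D ∧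
      ((d.toProd.1 = Sum.inl a.1 ∧ d.toProd.2 = Sum.inr a.2) ∨
       (d.toProd.1 = Sum.inr a.2 ∧ d.toProd.2 = Sum.inl a.1)) := fun d => hadj _ _ d.adj
  choose arc harcD harcP using hex
  -- the arc determines the dart's edge
  have hedge : ∀ d : F.Dart, d.edge = s(Sum.inl (arc d).1, Sum.inr (arc d).2) := by
    intro d
    rcases harcP d with ⟨h1, h2⟩ | ⟨h1, h2⟩
    · show s(d.toProd.1, d.toProd.2) = _
      rw [show d.toProd = ((d.toProd.1, d.toProd.2) : (Fin n ⊕ Fin n) × (Fin n ⊕ Fin n))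
          from rfl, h1, h2]
    · show s(d.toProd.1, d.toProd.2) = _
      rw [show d.toProd = ((d.toProd.1, d.toProd.2) : (Fin n ⊕ Fin n) × (Fin n ⊕ Fin n))
          from rfl, h1, h2]
      exact Sym2.eq_swap
  apply hBern.2.2
  refine ⟨m, hm0, fun i => arc (g i), fun i => Sum.elim id id (g i).toProd.2, ?_, ?_, ?_, ?_⟩
  · -- injectivity
    intro i j hij
    have hij' : arc (g i) = arc (g j) := hij
    have hnodup : (p.darts.map SimpleGraph.Dart.edge).Nodup := hp.edges_nodup
    have h1 : (g i).edge = (g j).edge := by rw [hedge, hedge, hij']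
    have h2 : (p.darts.map SimpleGraph.Dart.edge).get
          ⟨i.val, by simpa [hdlen] using ZMod.val_lt i⟩
        = (p.darts.map SimpleGraph.Dart.edge).get
          ⟨j.val, by simpa [hdlen] using ZMod.val_lt j⟩ := by
      simp only [List.get_eq_getElem, List.getElem_map]
      exact h1
    have h3 := (List.Nodup.get_inj_iff hnodup).mp h2
    have hv : i.val = j.val := by simpa using congrArg Fin.val h3
    exact ZMod.val_injective _ hv
  · exact fun i => harcD (g i)
  · -- same direction
    intro i
    show SameDir (arc (g i)) (arc (g (i + 1))) (Sum.elim id id (g i).toProd.2)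
    have hsh := hcons i
    rcases harcP (g i) with ⟨h1, h2⟩ | ⟨h1, h2⟩ <;>
      rcases harcP (g (i + 1)) with ⟨h3, h4⟩ | ⟨h3, h4⟩ <;>
      rw [h2] <;> rw [h2, h3] at hsh <;> simp_all [SameDir]
  · -- consecutive shared vertices differ
    intro i
    show Sum.elim id id (g i).toProd.2 ≠ Sum.elim id id (g (i + 1)).toProd.2
    have hlt := hord _ (harcD (g (i + 1)))
    rcases harcP (g (i + 1)) with ⟨h3, h4⟩ | ⟨h3, h4⟩ <;>
      rw [← hcons i] at h3 <;> rw [h3, h4] <;> simp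
    · exact hlt.ne
    · exact hlt.ne'
end

section
/- If a graph matroid M_n on the edge set of the complete graph K_n is an abstract 2-rigidity matroid (i.e., it has rank 2n-3 and every copy of K_4 is a circuit), then every M_n-independent graph G satisfies the Laman condition: every subset of m vertices with 2 ≤ m ≤ n spans at most 2m-3 edges of G. -/
/-- The vertex set of a graph given as a set of (undirected) edges. -/
def vertsOf {α : Type*} (G : Set (Sym2 α)) : Set α := {v | ∃ e ∈ G, v ∈ e}

/-- The degree of a vertex in a graph given as a set of edges. -/
noncomputable def edeg {α : Type*} (G : Set (Sym2 α)) (v : α) : ℕ := {e ∈ G | v ∈ e}.ncard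

/-- Laman's sparsity condition: every set of at least two vertices spans at
most `2m - 3` edges. This characterizes independence in the generic plane
rigidity matroid. -/
def Laman {n : ℕ} (G : Set (Sym2 (Fin n))) : Prop :=
  ∀ U : Finset (Fin n), 2 ≤ U.card →
    {e ∈ G | ∀ v ∈ e, v ∈ U}.ncard ≤ 2 * U.card - 3

/-- A circuit of a matroid: a dependent set all of whose proper subsets are
independent. -/
def IsCircuitIn {β : Type*} (M : Matroid β) (C : Set β) : Prop :=
  M.Dep C ∧ ∀ D : Set β, D ⊂ C → M.Indep D

/-- The matroid `M` has rank `k` (every base has `k` elements). -/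
def RankEq {β : Type*} (M : Matroid β) (k : ℕ) : Prop :=
  ∀ B : Set β, M.IsBase B → B.ncard = k

/-- The edge set of a copy of `K₄` given by an injection `f : Fin 4 ↪ Fin n`. -/
def K4Copy {n : ℕ} (f : Fin 4 ↪ Fin n) : Set (Sym2 (Fin n)) :=
  {e | ∃ u v : Fin 4, u ≠ v ∧ e = s(f u, f v)}

/-- An abstract 2-rigidity matroid on the edge set of `K_n`: its ground set
consists of all non-loop edges, it has rank `2n - 3`, and every copy of `K₄`
is a circuit. -/
def Rigidity2Matroid {n : ℕ} (M : Matroid (Sym2 (Fin n))) : Prop :=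
  M.E = {e : Sym2 (Fin n) | ¬ e.IsDiag} ∧ RankEq M (2 * n - 3) ∧
    ∀ f : Fin 4 ↪ Fin n, IsCircuitIn M (K4Copy f)

/-- A matroidal 2-rigidity family: a sequence of graph matroids of rank
`2n - 3`, symmetric and hereditary in the sense that independence is
preserved under any injection of the vertex set. -/
structure RigFamily where
  M : (n : ℕ) → Matroid (Sym2 (Fin n))
  ground : ∀ n : ℕ, (M n).E = {e : Sym2 (Fin n) | ¬ e.IsDiag}
  rank : ∀ n : ℕ, 2 ≤ n → RankEq (M n) (2 * n - 3)
  hered : ∀ {n m : ℕ} (f : Fin n ↪ Fin m) (G : Set (Sym2 (Fin n))),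
    (M n).Indep G ↔ (M m).Indep (Sym2.map (⇑f) '' G)

/-- The 0-extension property: attaching a new vertex by at most two edges to
an independent graph keeps it independent. -/
def ZeroExt (F : RigFamily) : Prop :=
  ∀ (n : ℕ) (G : Set (Sym2 (Fin n))) (v a b : Fin n),
    v ∉ vertsOf G → v ≠ a → v ≠ b →
    (F.M n).Indep G → (F.M n).Indep (G ∪ {s(v, a), s(v, b)})

/-- Adjacency in a graph given as a set of edges. -/
def EAdj {α : Type*} (G : Set (Sym2 α)) (a b : α) : Prop := a ≠ b ∧ s(a, b) ∈ G

/-- Connectivity of a graph given as a set of edges: any two of its vertices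
are joined by a walk. -/
def EConnected {α : Type*} (G : Set (Sym2 α)) : Prop :=
  ∀ u ∈ vertsOf G, ∀ w ∈ vertsOf G, Relation.ReflTransGen (EAdj G) u w

open Set

section RankAPI
set_option linter.unusedSectionVars false
variable {α : Type*} [Fintype α] {M : Matroid α} {I X Y C : Set α} {e : α}

noncomputable def rkOf (M : Matroid α) (X : Set α) : ℕ :=
  (M.exists_isBasis' X).choose.ncard

lemma rk_eq_of_basis' (hI : M.IsBasis' I X) : rkOf M X = I.ncard := by
  have h := (M.exists_isBasis' X).choose_spec
  have := h.encard_eq_encard hI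
  simp only [rkOf, Set.ncard_def, this]

lemma indep_ncard_le_rk (hI : M.Indep I) (hIX : I ⊆ X) : I.ncard ≤ rkOf M X := by
  obtain ⟨J, hJ, hIJ⟩ := hI.subset_isBasis'_of_subset hIX
  rw [rk_eq_of_basis' hJ]
  exact Set.ncard_le_ncard hIJ J.toFinite

lemma rk_le_ncard (M : Matroid α) (X : Set α) : rkOf M X ≤ X.ncard := by
  obtain ⟨I, hI⟩ := M.exists_isBasis' X
  rw [rk_eq_of_basis' hI]
  exact Set.ncard_le_ncard hI.subset X.toFinite

lemma rk_mono (M : Matroid α) (h : X ⊆ Y) : rkOf M X ≤ rkOf M Y := by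
  obtain ⟨I, hI⟩ := M.exists_isBasis' X
  rw [rk_eq_of_basis' hI]
  exact indep_ncard_le_rk hI.indep (hI.subset.trans h)

lemma rk_union_le (M : Matroid α) (X T : Set α) :
    rkOf M (X ∪ T) ≤ rkOf M X + T.ncard := by
  obtain ⟨J, hJ⟩ := M.exists_isBasis' (X ∪ T)
  rw [rk_eq_of_basis' hJ]
  have hsub : J \ X ⊆ T := fun x hx => ((hJ.subset hx.1).resolve_left hx.2)
  calc J.ncard = ((J ∩ X) ∪ (J \ X)).ncard := by rw [Set.inter_union_diff]
    _ ≤ (J ∩ X).ncard + (J \ X).ncard := Set.ncard_union_le _ _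
    _ ≤ rkOf M X + T.ncard :=
        add_le_add
          (indep_ncard_le_rk (hJ.indep.subset Set.inter_subset_left) Set.inter_subset_right)
          (Set.ncard_le_ncard hsub T.toFinite)

lemma rk_le_of_subset_closure (h : X ⊆ M.closure Y) : rkOf M X ≤ rkOf M Y := by
  obtain ⟨J, hJ⟩ := M.exists_isBasis' Y
  have h2 : rkOf M (M.closure Y) = J.ncard := rk_eq_of_basis' hJ.isBasis_closure_right.isBasis'
  rw [rk_eq_of_basis' hJ, ← h2]
  exact rk_mono M h

lemma rk_submod (M : Matroid α) (X Y : Set α) :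
    rkOf M (X ∪ Y) + rkOf M (X ∩ Y) ≤ rkOf M X + rkOf M Y := by
  obtain ⟨I, hI⟩ := M.exists_isBasis' (X ∩ Y)
  obtain ⟨J, hJ, hIJ⟩ := hI.indep.subset_isBasis'_of_subset
    (hI.subset.trans (Set.inter_subset_left.trans Set.subset_union_left))
  rw [rk_eq_of_basis' hJ, rk_eq_of_basis' hI]
  have key : J.ncard + I.ncard ≤ (J ∩ X).ncard + (J ∩ Y).ncard := by
    have h3 : (J ∩ X).ncard + (J ∩ Y).ncard
        = ((J ∩ X) ∪ (J ∩ Y)).ncard + ((J ∩ X) ∩ (J ∩ Y)).ncard :=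
      (Set.ncard_union_add_ncard_inter _ _ (J ∩ X).toFinite (J ∩ Y).toFinite).symm
    have h4 : (J ∩ X) ∪ (J ∩ Y) = J := by
      rw [← Set.inter_union_distrib_left]
      exact Set.inter_eq_left.mpr hJ.subset
    have h5 : I ⊆ (J ∩ X) ∩ (J ∩ Y) := fun x hx =>
      ⟨⟨hIJ hx, (hI.subset hx).1⟩, hIJ hx, (hI.subset hx).2⟩
    rw [h3, h4]
    exact add_le_add le_rfl (Set.ncard_le_ncard h5 ((J ∩ X) ∩ (J ∩ Y)).toFinite)
  refine key.trans (add_le_add ?_ ?_)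
  · exact indep_ncard_le_rk (hJ.indep.subset Set.inter_subset_left) Set.inter_subset_right
  · exact indep_ncard_le_rk (hJ.indep.subset Set.inter_subset_left) Set.inter_subset_right

end RankAPI

/- K4 closure -/
lemma circuit_mem_closure {β : Type*} {M : Matroid β} {C : Set β} {e : β}
    (hC : IsCircuitIn M C) (he : e ∈ C) : e ∈ M.closure (C \ {e}) := by
  have hI : M.Indep (C \ {e}) := hC.2 _ (Set.sdiff_singleton_ssubset.mpr he)
  rw [hI.mem_closure_iff]
  left
  rw [Set.insert_diff_singleton, Set.insert_eq_of_mem he]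
  exact hC.1

def mkEmb {n : ℕ} (a b c d : Fin n) (hab : a ≠ b) (hac : a ≠ c) (had : a ≠ d)
    (hbc : b ≠ c) (hbd : b ≠ d) (hcd : c ≠ d) : Fin 4 ↪ Fin n :=
  ⟨![a, b, c, d], by
    intro i j hij
    fin_cases i <;> fin_cases j <;> simp_all⟩

lemma mkEmb_apply {n : ℕ} (a b c d : Fin n) (hab : a ≠ b) (hac : a ≠ c) (had : a ≠ d)
    (hbc : b ≠ c) (hbd : b ≠ d) (hcd : c ≠ d) (i : Fin 4) :
    mkEmb a b c d hab hac had hbc hbd hcd i = ![a, b, c, d] i := rfl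

lemma k4_closure_mem {n : ℕ} {M : Matroid (Sym2 (Fin n))}
    (hM : ∀ f : Fin 4 ↪ Fin n, IsCircuitIn M (K4Copy f))
    {a b c d : Fin n} (hab : a ≠ b) (hac : a ≠ c) (had : a ≠ d)
    (hbc : b ≠ c) (hbd : b ≠ d) (hcd : c ≠ d) :
    s(a, b) ∈ M.closure {s(c, d), s(a, c), s(a, d), s(b, c), s(b, d)} := by
  set f := mkEmb a b c d hab hac had hbc hbd hcd with hf
  have hC := hM f
  have h1 : s(a, b) ∈ K4Copy f := ⟨0, 1, by decide, by simp [hf, mkEmb_apply]⟩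
  have h2 := circuit_mem_closure hC h1
  refine M.closure_subset_closure ?_ h2
  rintro e ⟨⟨u, v, huv, rfl⟩, hne⟩
  simp only [Set.mem_singleton_iff] at hne
  fin_cases u <;> fin_cases v <;>
    simp_all [hf, mkEmb_apply, Sym2.eq_iff]

/- KS: edges of the clique on a vertex set U -/
def KS {n : ℕ} (U : Finset (Fin n)) : Set (Sym2 (Fin n)) :=
  {e | ¬ e.IsDiag ∧ ∀ v ∈ e, v ∈ U}

lemma mem_KS {n : ℕ} {U : Finset (Fin n)} {p q : Fin n} :
    s(p, q) ∈ KS U ↔ p ≠ q ∧ p ∈ U ∧ q ∈ U := by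
  simp only [KS, Set.mem_setOf_eq, Sym2.mk_isDiag_iff]
  constructor
  · exact fun ⟨h1, h2⟩ => ⟨h1, h2 p (Sym2.mem_mk_left p q), h2 q (Sym2.mem_mk_right p q)⟩
  · rintro ⟨h1, h2, h3⟩
    refine ⟨h1, fun v hv => ?_⟩
    rcases Sym2.mem_iff.mp hv with rfl | rfl <;> assumption

lemma KS_subset_ground {n : ℕ} {M : Matroid (Sym2 (Fin n))}
    (hE : M.E = {e : Sym2 (Fin n) | ¬ e.IsDiag}) (U : Finset (Fin n)) : KS U ⊆ M.E := by
  rw [hE]; exact fun e he => he.1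

lemma KS_univ {n : ℕ} {M : Matroid (Sym2 (Fin n))}
    (hE : M.E = {e : Sym2 (Fin n) | ¬ e.IsDiag}) :
    KS (Finset.univ : Finset (Fin n)) = M.E := by
  rw [hE]; ext e; simp [KS]

lemma KS_insert_subset_closure {n : ℕ} {M : Matroid (Sym2 (Fin n))}
    (hM4 : ∀ f : Fin 4 ↪ Fin n, IsCircuitIn M (K4Copy f))
    (hE : M.E = {e : Sym2 (Fin n) | ¬ e.IsDiag})
    {U : Finset (Fin n)} {w a b : Fin n} (ha : a ∈ U) (hb : b ∈ U) (hab : a ≠ b)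
    (hw : w ∉ U) :
    KS (insert w U) ⊆ M.closure (KS U ∪ {s(w, a), s(w, b)}) := by
  have hwa : w ≠ a := fun h => hw (h ▸ ha)
  have hwb : w ≠ b := fun h => hw (h ▸ hb)
  have hXE : KS U ∪ {s(w, a), s(w, b)} ⊆ M.E := by
    rw [hE]
    rintro e (he | he)
    · exact he.1
    · rcases he with rfl | rfl <;> simpa [Sym2.mk_isDiag_iff]
  intro e he
  induction e using Sym2.ind with
  | _ p q =>
    rw [mem_KS] at he
    obtain ⟨hpq, hp, hq⟩ := he
    simp only [Finset.mem_insert] at hp hq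
    -- helper to handle the case p ∈ U, q = w (i.e. edge s(p, w))
    have main : ∀ p : Fin n, p ∈ U → s(w, p) ∈ M.closure (KS U ∪ {s(w, a), s(w, b)}) := by
      intro p hpU
      by_cases hpa : p = a
      · exact M.subset_closure _ hXE (Or.inr (Or.inl (by rw [hpa])))
      by_cases hpb : p = b
      · exact M.subset_closure _ hXE (Or.inr (Or.inr (by rw [hpb]; exact rfl)))
      have hwp : w ≠ p := fun h => hw (h ▸ hpU)
      have hkey := k4_closure_mem hM4 hwp hwa hwb
        hpa hpb hab
      refine M.closure_subset_closure ?_ hkey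
      rintro x (rfl | rfl | rfl | rfl | rfl)
      · exact Or.inl (mem_KS.mpr ⟨hab, ha, hb⟩)
      · exact Or.inr (Or.inl rfl)
      · exact Or.inr (Or.inr rfl)
      · exact Or.inl (mem_KS.mpr ⟨fun h => hpa h, hpU, ha⟩)
      · exact Or.inl (mem_KS.mpr ⟨fun h => hpb h, hpU, hb⟩)
    rcases hp with rfl | hpU
    · rcases hq with rfl | hqU
      · exact absurd rfl hpq
      · exact main q hqU
    · rcases hq with rfl | hqU
      · rw [show s(p, q) = s(q, p) from Sym2.eq_swap]; exact main p hpU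
      · exact M.subset_closure _ hXE (Or.inl (mem_KS.mpr ⟨hpq, hpU, hqU⟩))

lemma rk_KS_chain {n : ℕ} {M : Matroid (Sym2 (Fin n))}
    (hM4 : ∀ f : Fin 4 ↪ Fin n, IsCircuitIn M (K4Copy f))
    (hE : M.E = {e : Sym2 (Fin n) | ¬ e.IsDiag}) :
    ∀ (k : ℕ) (U V : Finset (Fin n)), U ⊆ V → V.card = U.card + k → 2 ≤ U.card →
      rkOf M (KS V) ≤ rkOf M (KS U) + 2 * k := by
  intro k
  induction k with
  | zero =>
    intro U V hUV hcard _
    have : U = V := Finset.eq_of_subset_of_card_le hUV (by omega)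
    rw [this]; omega
  | succ k IH =>
    intro U V hUV hcard hU2
    have hne : ∃ w, w ∈ V ∧ w ∉ U := by
      by_contra h
      push_neg at h
      have : V ⊆ U := fun x hx => h x hx
      have := Finset.card_le_card this
      omega
    obtain ⟨w, hwV, hwU⟩ := hne
    obtain ⟨a, ha, b, hb, hab⟩ := Finset.one_lt_card.mp (by omega : 1 < U.card)
    have hstep : rkOf M (KS (insert w U)) ≤ rkOf M (KS U) + 2 := by
      have h1 := rk_le_of_subset_closure
        (KS_insert_subset_closure hM4 hE ha hb hab hwU)
      refine h1.trans ((rk_union_le M _ _).trans ?_)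
      have : ({s(w, a), s(w, b)} : Set (Sym2 (Fin n))).ncard ≤ 2 := by
        refine (Set.ncard_insert_le _ _).trans ?_
        simp
      omega
    have hins : insert w U ⊆ V := Finset.insert_subset hwV hUV
    have hcard' : V.card = (insert w U).card + k := by
      rw [Finset.card_insert_of_notMem hwU]; omega
    have := IH (insert w U) V hins hcard' (by rw [Finset.card_insert_of_notMem hwU]; omega)
    omega

lemma rk_KS_lower {n : ℕ} {M : Matroid (Sym2 (Fin n))}
    (hM : Rigidity2Matroid M) {U : Finset (Fin n)} (hU : 2 ≤ U.card) :
    2 * U.card - 3 ≤ rkOf M (KS U) := by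
  obtain ⟨hE, hrank, hM4⟩ := hM
  obtain ⟨B, hB⟩ := M.exists_isBase
  have hrkE : rkOf M M.E = 2 * n - 3 := by
    rw [rk_eq_of_basis' hB.isBasis_ground.isBasis']
    exact hrank B hB
  have hcardU : U.card ≤ n := by
    have := Finset.card_le_univ U
    simpa using this
  have hchain := rk_KS_chain hM4 hE (n - U.card) U Finset.univ (Finset.subset_univ U)
    (by simp; omega) hU
  rw [KS_univ hE, hrkE] at hchain
  omega

set_option maxHeartbeats 2000000 in
lemma rk_KS_upper {n : ℕ} {M : Matroid (Sym2 (Fin n))}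
    (hM : Rigidity2Matroid M) :
    ∀ (m : ℕ) (U : Finset (Fin n)), 2 ≤ m → U.card = m → rkOf M (KS U) ≤ 2 * m - 3 := by
  have hE := hM.1
  have hM4 := hM.2.2
  intro m
  induction m using Nat.strong_induction_on with
  | _ m IH =>
    intro U hm2 hcard
    rcases Nat.lt_or_ge m 5 with hm5 | hm5
    · -- base cases m = 2, 3, 4
      interval_cases m
      · -- m = 2
        obtain ⟨a, b, hab, rfl⟩ := Finset.card_eq_two.mp hcard
        have hsub : KS ({a, b} : Finset (Fin n)) ⊆ {s(a, b)} := by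
          intro e he
          induction e using Sym2.ind with
          | _ p q =>
            obtain ⟨hpq, hp, hq⟩ := mem_KS.mp he
            simp only [Finset.mem_insert, Finset.mem_singleton] at hp hq
            rcases hp with rfl | rfl <;> rcases hq with rfl | rfl <;>
              simp_all [Sym2.eq_iff]
        exact (rk_mono M hsub).trans ((rk_le_ncard M _).trans (by simp))
      · -- m = 3
        obtain ⟨a, b, c, hab, hac, hbc, rfl⟩ := Finset.card_eq_three.mp hcard
        have hsub : KS ({a, b, c} : Finset (Fin n)) ⊆ {s(a, b), s(a, c), s(b, c)} := by
          intro e he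
          induction e using Sym2.ind with
          | _ p q =>
            obtain ⟨hpq, hp, hq⟩ := mem_KS.mp he
            simp only [Finset.mem_insert, Finset.mem_singleton] at hp hq
            rcases hp with rfl | rfl | rfl <;> rcases hq with rfl | rfl | rfl <;>
              simp_all [Sym2.eq_iff]
        refine (rk_mono M hsub).trans ((rk_le_ncard M _).trans ?_)
        refine ((Set.ncard_insert_le _ _).trans ?_)
        have := Set.ncard_insert_le s(a, c) ({s(b, c)} : Set (Sym2 (Fin n)))
        simp only [Set.ncard_singleton] at this
        omega
      · -- m = 4
        have ha : ∃ a, a ∈ U := Finset.card_pos.mp (by omega) |>.imp fun a h => h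
        obtain ⟨a, ha⟩ := ha
        have h3 : (U.erase a).card = 3 := by rw [Finset.card_erase_of_mem ha]; omega
        obtain ⟨b, c, d, hbc, hbd, hcd, herase⟩ := Finset.card_eq_three.mp h3
        have hbe : b ∈ U.erase a := by rw [herase]; simp
        have hce : c ∈ U.erase a := by rw [herase]; simp
        have hde : d ∈ U.erase a := by rw [herase]; simp
        have hab : a ≠ b := ((Finset.mem_erase.mp hbe).1).symm
        have hac : a ≠ c := ((Finset.mem_erase.mp hce).1).symm
        have had : a ≠ d := ((Finset.mem_erase.mp hde).1).symm
        have hU : U = insert a {b, c, d} := by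
          rw [← Finset.insert_erase ha, herase]
        have hTE : ({s(c, d), s(a, c), s(a, d), s(b, c), s(b, d)} : Set (Sym2 (Fin n))) ⊆ M.E := by
          rw [hE]
          rintro x (rfl | rfl | rfl | rfl | rfl) <;> simpa [Sym2.mk_isDiag_iff]
        have h16 : KS U ⊆ insert s(a, b) {s(c, d), s(a, c), s(a, d), s(b, c), s(b, d)} := by
          intro e he
          induction e using Sym2.ind with
          | _ p q =>
            obtain ⟨hpq, hp, hq⟩ := mem_KS.mp he
            rw [hU] at hp hq
            simp only [Finset.mem_insert, Finset.mem_singleton] at hp hq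
            rcases hp with rfl | rfl | rfl | rfl <;> rcases hq with rfl | rfl | rfl | rfl <;>
              simp_all [Sym2.eq_iff]
        have hclo : insert s(a, b) {s(c, d), s(a, c), s(a, d), s(b, c), s(b, d)}
            ⊆ M.closure {s(c, d), s(a, c), s(a, d), s(b, c), s(b, d)} := by
          rintro x (rfl | hx)
          · exact k4_closure_mem hM4 hab hac had hbc hbd hcd
          · exact M.subset_closure _ hTE hx
        refine (rk_le_of_subset_closure (h16.trans hclo)).trans
          ((rk_le_ncard M _).trans ?_)
        have h5 : ({s(c, d), s(a, c), s(a, d), s(b, c), s(b, d)} : Set (Sym2 (Fin n))).ncard ≤ 5 := by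
          refine (Set.ncard_insert_le _ _).trans ?_
          have h4 := Set.ncard_insert_le s(a, c) ({s(a, d), s(b, c), s(b, d)} : Set (Sym2 (Fin n)))
          have h3' := Set.ncard_insert_le s(a, d) ({s(b, c), s(b, d)} : Set (Sym2 (Fin n)))
          have h2' := Set.ncard_insert_le s(b, c) ({s(b, d)} : Set (Sym2 (Fin n)))
          simp only [Set.ncard_singleton] at h2'
          omega
        omega
    · -- inductive step m ≥ 5
      obtain ⟨x, hx, y, hy, hxy⟩ := Finset.one_lt_card.mp (by omega : 1 < U.card)
      set A := U.erase x with hA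
      set B := U.erase y with hB
      have hAcard : A.card = m - 1 := by rw [hA, Finset.card_erase_of_mem hx]; omega
      have hBcard : B.card = m - 1 := by rw [hB, Finset.card_erase_of_mem hy]; omega
      have hABeq : A ∩ B = (U.erase x).erase y := by
        ext z; simp [hA, hB, Finset.mem_erase, Finset.mem_inter]; tauto
      have hABcard : (A ∩ B).card = m - 2 := by
        rw [hABeq, Finset.card_erase_of_mem (Finset.mem_erase.mpr ⟨hxy.symm, hy⟩),
          Finset.card_erase_of_mem hx]
        omega
      have hKSinter : KS A ∩ KS B = KS (A ∩ B) := by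
        ext e
        simp only [KS, Set.mem_inter_iff, Set.mem_setOf_eq, Finset.mem_inter]
        constructor
        · rintro ⟨⟨h1, h2⟩, ⟨_, h3⟩⟩
          exact ⟨h1, fun v hv => ⟨h2 v hv, h3 v hv⟩⟩
        · rintro ⟨h1, h2⟩
          exact ⟨⟨h1, fun v hv => (h2 v hv).1⟩, ⟨h1, fun v hv => (h2 v hv).2⟩⟩
      obtain ⟨c, hcAB, d, hdAB, hcd⟩ := Finset.one_lt_card.mp (by omega : 1 < (A ∩ B).card)
      have hcA := Finset.mem_inter.mp hcAB
      have hdA := Finset.mem_inter.mp hdAB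
      have hcx : c ≠ x := (Finset.mem_erase.mp hcA.1).1
      have hcy : c ≠ y := (Finset.mem_erase.mp hcA.2).1
      have hcU : c ∈ U := (Finset.mem_erase.mp hcA.1).2
      have hdx : d ≠ x := (Finset.mem_erase.mp hdA.1).1
      have hdy : d ≠ y := (Finset.mem_erase.mp hdA.2).1
      have hdU : d ∈ U := (Finset.mem_erase.mp hdA.1).2
      have hXE : KS A ∪ KS B ⊆ M.E := by
        rintro e (he | he)
        · exact KS_subset_ground hE A he
        · exact KS_subset_ground hE B he
      have hxyclo : s(x, y) ∈ M.closure (KS A ∪ KS B) := by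
        have hk4 := k4_closure_mem hM4 hxy hcx.symm hdx.symm hcy.symm hdy.symm hcd
        refine M.closure_subset_closure ?_ hk4
        rintro z (rfl | rfl | rfl | rfl | rfl)
        · exact Or.inl (mem_KS.mpr ⟨hcd, Finset.mem_erase.mpr ⟨hcx, hcU⟩,
            Finset.mem_erase.mpr ⟨hdx, hdU⟩⟩)
        · exact Or.inr (mem_KS.mpr ⟨hcx.symm, Finset.mem_erase.mpr ⟨hxy, hx⟩,
            Finset.mem_erase.mpr ⟨hcy, hcU⟩⟩)
        · exact Or.inr (mem_KS.mpr ⟨hdx.symm, Finset.mem_erase.mpr ⟨hxy, hx⟩,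
            Finset.mem_erase.mpr ⟨hdy, hdU⟩⟩)
        · exact Or.inl (mem_KS.mpr ⟨hcy.symm, Finset.mem_erase.mpr ⟨hxy.symm, hy⟩,
            Finset.mem_erase.mpr ⟨hcx, hcU⟩⟩)
        · exact Or.inl (mem_KS.mpr ⟨hdy.symm, Finset.mem_erase.mpr ⟨hxy.symm, hy⟩,
            Finset.mem_erase.mpr ⟨hdx, hdU⟩⟩)
      have cross : KS U ⊆ M.closure (KS A ∪ KS B) := by
        intro e he
        induction e using Sym2.ind with
        | _ p q =>
          obtain ⟨hpq, hp, hq⟩ := mem_KS.mp he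
          by_cases hpx : p = x
          · by_cases hqy : q = y
            · rw [hpx, hqy]; exact hxyclo
            · -- q ≠ y, p = x, so p ≠ y (x ≠ y); e ∈ KS B
              refine M.subset_closure _ hXE (Or.inr (mem_KS.mpr ⟨hpq, ?_, ?_⟩))
              · exact Finset.mem_erase.mpr ⟨hpx ▸ hxy, hp⟩
              · exact Finset.mem_erase.mpr ⟨hqy, hq⟩
          · by_cases hqx : q = x
            · by_cases hpy : p = y
              · rw [hpy, hqx, show s(y, x) = s(x, y) from Sym2.eq_swap]; exact hxyclo
              · refine M.subset_closure _ hXE (Or.inr (mem_KS.mpr ⟨hpq, ?_, ?_⟩))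
                · exact Finset.mem_erase.mpr ⟨hpy, hp⟩
                · exact Finset.mem_erase.mpr ⟨hqx ▸ hxy, hq⟩
            · refine M.subset_closure _ hXE (Or.inl (mem_KS.mpr ⟨hpq, ?_, ?_⟩))
              · exact Finset.mem_erase.mpr ⟨hpx, hp⟩
              · exact Finset.mem_erase.mpr ⟨hqx, hq⟩
      have h1 : rkOf M (KS U) ≤ rkOf M (KS A ∪ KS B) := rk_le_of_subset_closure cross
      have h2 := rk_submod M (KS A) (KS B)
      rw [hKSinter] at h2
      have hA' := IH (m - 1) (by omega) A (by omega) hAcard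
      have hB' := IH (m - 1) (by omega) B (by omega) hBcard
      have hlow := rk_KS_lower hM (U := A ∩ B) (by omega)
      rw [hABcard] at hlow
      omega


/-- Independent graphs of any abstract 2-rigidity matroid satisfy the Laman
condition, i.e. they are independent in the generic plane rigidity matroid. -/
theorem stmt6 (n : ℕ) (M : Matroid (Sym2 (Fin n))) (hM : Rigidity2Matroid M)
    (G : Set (Sym2 (Fin n))) (hG : M.Indep G) : Laman G := by
  intro U hU
  have hGE := hG.subset_ground
  have hsub : {e ∈ G | ∀ v ∈ e, v ∈ U} ⊆ KS U := by
    rintro e ⟨heG, hev⟩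
    refine ⟨?_, hev⟩
    have := hGE heG
    rwa [hM.1] at this
  have hind : M.Indep {e ∈ G | ∀ v ∈ e, v ∈ U} := hG.subset (Set.sep_subset _ _)
  calc {e ∈ G | ∀ v ∈ e, v ∈ U}.ncard ≤ rkOf M (KS U) := indep_ncard_le_rk hind hsub
    _ ≤ 2 * U.card - 3 := rk_KS_upper hM U.card U hU rfl
end

section
/- Let M be a matroidal 2-rigidity family with the 0-extension property. Then: (1) every M-circuit has minimum degree at least 3; (2) every connected graph with maximum degree at most 3 that has a vertex of degree at most 2 is M-independent; (3) every connected cubic graph that is M-dependent is an M-circuit. -/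
section Aux

open Relation

variable {α : Type*}

lemma vertsOf_mono' {H G : Set (Sym2 α)} (h : H ⊆ G) : vertsOf H ⊆ vertsOf G :=
  fun _ ⟨e, he, hve⟩ => ⟨e, h he, hve⟩

lemma edeg_mono' [Finite α] {H G : Set (Sym2 α)} (h : H ⊆ G) (v : α) :
    edeg H v ≤ edeg G v :=
  Set.ncard_le_ncard (fun e ⟨he, hv⟩ => ⟨h he, hv⟩) (Set.toFinite _)

lemma edeg_pos_of_mem [Finite α] {G : Set (Sym2 α)} {v : α} (h : v ∈ vertsOf G) :
    1 ≤ edeg G v := by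
  obtain ⟨e, he, hve⟩ := h
  exact (Set.ncard_pos (Set.toFinite _)).mpr ⟨e, he, hve⟩

lemma edeg_eq_zero_of_not_mem {G : Set (Sym2 α)} {v : α} (h : v ∉ vertsOf G) :
    edeg G v = 0 := by
  have : {e ∈ G | v ∈ e} = ∅ := by
    ext e; simp only [Set.mem_setOf_eq, Set.mem_empty_iff_false, iff_false, not_and]
    exact fun he hv => h ⟨e, he, hv⟩
  simp [edeg, this]

lemma edeg_del [Finite α] {H G : Set (Sym2 α)} {e₀ : Sym2 α} {a : α}
    (hHG : H ⊆ G) (he₀ : e₀ ∈ G) (hne : e₀ ∉ H) (ha : a ∈ e₀) :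
    edeg H a + 1 ≤ edeg G a := by
  have h1 : insert e₀ {e ∈ H | a ∈ e} ⊆ {e ∈ G | a ∈ e} := by
    rintro e (rfl | ⟨he, hae⟩)
    · exact ⟨he₀, ha⟩
    · exact ⟨hHG he, hae⟩
  have h2 : e₀ ∉ {e ∈ H | a ∈ e} := fun h => hne h.1
  calc edeg H a + 1 = (insert e₀ {e ∈ H | a ∈ e}).ncard :=
        (Set.ncard_insert_of_notMem h2 (Set.toFinite _)).symm
    _ ≤ _ := Set.ncard_le_ncard h1 (Set.toFinite _)

lemma extract_two {S : Set (Sym2 α)} {w : α} (hfin : S.Finite)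
    (hd : ∀ e ∈ S, ¬ e.IsDiag) (hw : ∀ e ∈ S, w ∈ e) (hc : S.ncard ≤ 2)
    (hne : S.Nonempty) :
    ∃ a b : α, a ≠ w ∧ b ≠ w ∧ S ⊆ {s(w, a), s(w, b)} := by
  obtain ⟨e₁, he₁⟩ := hne
  have hw1 : w ∈ e₁ := hw e₁ he₁
  set a := Sym2.Mem.other hw1 with ha
  have he₁eq : e₁ = s(w, a) := (Sym2.other_spec hw1).symm
  have haw : a ≠ w := Sym2.other_ne (hd e₁ he₁) hw1
  rcases (S \ {e₁}).eq_empty_or_nonempty with h | ⟨e₂, he₂S, he₂ne⟩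
  · refine ⟨a, a, haw, haw, fun e he => ?_⟩
    have : e = e₁ := by
      by_contra hcon
      exact absurd (Set.eq_empty_iff_forall_notMem.mp h e ⟨he, hcon⟩) (fun x => x)
    rw [this, he₁eq]; exact Set.mem_insert _ _
  · simp only [Set.mem_singleton_iff] at he₂ne
    have hw2 : w ∈ e₂ := hw e₂ he₂S
    set b := Sym2.Mem.other hw2 with hb
    have he₂eq : e₂ = s(w, b) := (Sym2.other_spec hw2).symm
    have hbw : b ≠ w := Sym2.other_ne (hd e₂ he₂S) hw2
    have hsub : ({e₁, e₂} : Set (Sym2 α)) ⊆ S := by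
      rintro e (rfl | rfl)
      exacts [he₁, he₂S]
    have hSeq : ({e₁, e₂} : Set (Sym2 α)) = S :=
      Set.eq_of_subset_of_ncard_le hsub (by rw [Set.ncard_pair (Ne.symm he₂ne)]; exact hc) hfin
    refine ⟨a, b, haw, hbw, ?_⟩
    rw [← hSeq]
    rintro e (rfl | rfl)
    · rw [he₁eq]; exact Set.mem_insert _ _
    · rw [he₂eq]; exact Set.mem_insert_of_mem _ rfl

lemma walk_del {G H : Set (Sym2 α)} {u w : α}
    (hwalk : Relation.ReflTransGen (EAdj G) u w) :
    Relation.ReflTransGen (EAdj H) u w ∨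
      ∃ a, Relation.ReflTransGen (EAdj H) u a ∧ ∃ e ∈ G, e ∉ H ∧ a ∈ e := by
  classical
  induction hwalk using Relation.ReflTransGen.head_induction_on with
  | refl => exact Or.inl Relation.ReflTransGen.refl
  | head hadj hrest ih =>
    rename_i p q
    by_cases hm : s(p, q) ∈ H
    · rcases ih with h | ⟨x, hx, hrest'⟩
      · exact Or.inl (Relation.ReflTransGen.head ⟨hadj.1, hm⟩ h)
      · exact Or.inr ⟨x, Relation.ReflTransGen.head ⟨hadj.1, hm⟩ hx, hrest'⟩
    · exact Or.inr ⟨p, Relation.ReflTransGen.refl, s(p, q), hadj.2, hm, Sym2.mem_mk_left _ _⟩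

lemma end_not_w {G' : Set (Sym2 α)} {u x w : α}
    (hG' : ∀ e ∈ G', w ∉ e) (hu : u ≠ w)
    (hwalk : Relation.ReflTransGen (EAdj G') u x) : x ≠ w := by
  rcases hwalk.cases_tail with rfl | ⟨c, _, hcx⟩
  · exact hu
  · exact fun hxw => hG' _ hcx.2 (hxw ▸ Sym2.mem_mk_right c x)

lemma lemA (F : RigFamily) (hz : ZeroExt F) (n : ℕ) (G : Set (Sym2 (Fin n)))
    (hd : ∀ e ∈ G, ¬ e.IsDiag) (h3 : ∀ v, edeg G v ≤ 3)
    (hreach : ∀ u ∈ vertsOf G, ∃ w, edeg G w ≤ 2 ∧ Relation.ReflTransGen (EAdj G) u w) :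
    (F.M n).Indep G := by
  classical
  suffices H : ∀ k (G : Set (Sym2 (Fin n))), G.ncard = k →
      (∀ e ∈ G, ¬ e.IsDiag) → (∀ v, edeg G v ≤ 3) →
      (∀ u ∈ vertsOf G, ∃ w, edeg G w ≤ 2 ∧ Relation.ReflTransGen (EAdj G) u w) →
      (F.M n).Indep G from H G.ncard G rfl hd h3 hreach
  intro k
  induction k using Nat.strong_induction_on with
  | _ k ih =>
    intro G hk hd h3 hreach
    rcases G.eq_empty_or_nonempty with rfl | ⟨e₀, he₀⟩
    · exact (F.M n).empty_indep
    · -- get a vertex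
      induction e₀ using Sym2.ind with
      | _ x y =>
        have hx : x ∈ vertsOf G := ⟨s(x, y), he₀, Sym2.mem_mk_left _ _⟩
        obtain ⟨w, hw2, hwalk⟩ := hreach x hx
        have hwv : w ∈ vertsOf G := by
          rcases hwalk.cases_tail with rfl | ⟨c, _, hcw⟩
          · exact hx
          · exact ⟨s(c, w), hcw.2, Sym2.mem_mk_right _ _⟩
        set G' := {e ∈ G | w ∉ e} with hG'def
        have hG'sub : G' ⊆ G := fun e he => he.1
        have hG'avoid : ∀ e ∈ G', w ∉ e := fun e he => he.2
        set S := {e ∈ G | w ∈ e} with hSdef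
        have hSne : S.Nonempty := hwv.imp fun e ⟨he, hwe⟩ => ⟨he, hwe⟩
        obtain ⟨a, b, haw, hbw, hSab⟩ :=
          extract_two (Set.toFinite _) (fun e he => hd e he.1) (fun e he => he.2) hw2 hSne
        obtain ⟨eS, heS⟩ := hSne
        have hss : G' ⊂ G := ⟨hG'sub, fun hGG' => (hGG' heS.1).2 heS.2⟩
        have hlt : G'.ncard < k := hk ▸ Set.ncard_lt_ncard hss (Set.toFinite _)
        have hreach' : ∀ u ∈ vertsOf G', ∃ w',
            edeg G' w' ≤ 2 ∧ Relation.ReflTransGen (EAdj G') u w' := by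
          intro u hu
          have hunw : u ≠ w := by
            obtain ⟨e, he, hue⟩ := hu
            exact fun h => hG'avoid e he (h ▸ hue)
          obtain ⟨w', hw'2, hwalk'⟩ := hreach u (vertsOf_mono' hG'sub hu)
          rcases walk_del (H := G') hwalk' with h | ⟨z, hzwalk, e, heG, heH, hze⟩
          · exact ⟨w', le_trans (edeg_mono' hG'sub w') hw'2, h⟩
          · have hwe : w ∈ e := by
              by_contra hcon
              exact heH ⟨heG, hcon⟩
            have hzw : z ≠ w := end_not_w hG'avoid hunw hzwalk
            refine ⟨z, ?_, hzwalk⟩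
            have h1 := edeg_del hG'sub heG heH hze
            have h2 := h3 z
            omega
        have hindep' : (F.M n).Indep G' :=
          ih G'.ncard hlt G' rfl (fun e he => hd e (hG'sub he))
            (fun v => le_trans (edeg_mono' hG'sub v) (h3 v)) hreach'
        have hnv : w ∉ vertsOf G' := fun ⟨e, he, hwe⟩ => hG'avoid e he hwe
        have hext := hz n G' w a b hnv (Ne.symm haw) (Ne.symm hbw) hindep'
        refine hext.subset fun e he => ?_
        by_cases hwe : w ∈ e
        · exact Or.inr (hSab ⟨he, hwe⟩)
        · exact Or.inl ⟨he, hwe⟩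


/-- For a matroidal 2-rigidity family with the 0-extension property:
(1) every circuit has minimum degree at least 3;
(2) every connected properly subcubic graph is independent;
(3) every connected cubic dependent graph is a circuit. -/
theorem stmt9 (F : RigFamily) (hz : ZeroExt F) (n : ℕ) :
    (∀ C : Set (Sym2 (Fin n)), IsCircuitIn (F.M n) C →
      ∀ v ∈ vertsOf C, 3 ≤ edeg C v) ∧
    (∀ G : Set (Sym2 (Fin n)), (∀ e ∈ G, ¬ e.IsDiag) → EConnected G →
      (∀ v : Fin n, edeg G v ≤ 3) → (∃ v ∈ vertsOf G, edeg G v ≤ 2) →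
      (F.M n).Indep G) ∧
    (∀ G : Set (Sym2 (Fin n)), EConnected G →
      (∀ v ∈ vertsOf G, edeg G v = 3) → (F.M n).Dep G →
      IsCircuitIn (F.M n) G) := by
  classical
  refine ⟨?_, ?_, ?_⟩
  · -- part 1
    intro C hC v hv
    by_contra hlt
    push_neg at hlt
    have hv2 : edeg C v ≤ 2 := by omega
    have hCE : C ⊆ (F.M n).E := hC.1.subset_ground
    have hd : ∀ e ∈ C, ¬ e.IsDiag := by
      intro e he
      have := hCE he
      rwa [F.ground n] at this
    set C' := {e ∈ C | v ∉ e} with hC'def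
    have hC'sub : C' ⊆ C := fun e he => he.1
    obtain ⟨e₀, he₀C, hve₀⟩ := hv
    have hss : C' ⊂ C := ⟨hC'sub, fun h => (h he₀C).2 hve₀⟩
    have hindep' : (F.M n).Indep C' := hC.2 C' hss
    set S := {e ∈ C | v ∈ e} with hSdef
    have hSne : S.Nonempty := ⟨e₀, he₀C, hve₀⟩
    obtain ⟨a, b, hav, hbv, hSab⟩ :=
      extract_two (Set.toFinite _) (fun e he => hd e he.1) (fun e he => he.2) hv2 hSne
    have hnv : v ∉ vertsOf C' := fun ⟨e, he, hve⟩ => he.2 hve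
    have hext := hz n C' v a b hnv (Ne.symm hav) (Ne.symm hbv) hindep'
    have hCsub : C ⊆ C' ∪ {s(v, a), s(v, b)} := by
      intro e he
      by_cases hve : v ∈ e
      · exact Or.inr (hSab ⟨he, hve⟩)
      · exact Or.inl ⟨he, hve⟩
    exact hC.1.not_indep (hext.subset hCsub)
  · -- part 2
    rintro G hd hconn h3 ⟨v, hv, hv2⟩
    exact lemA F hz n G hd h3 fun u hu => ⟨v, hv2, hconn u hu v hv⟩
  · -- part 3
    intro G hconn h3 hdep
    refine ⟨hdep, fun D hD => ?_⟩
    have hGE : G ⊆ (F.M n).E := hdep.subset_ground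
    have hd : ∀ e ∈ G, ¬ e.IsDiag := by
      intro e he
      have := hGE he
      rwa [F.ground n] at this
    obtain ⟨e₀, he₀G, he₀D⟩ := Set.exists_of_ssubset hD
    set H := G \ {e₀} with hHdef
    have hHsub : H ⊆ G := Set.diff_subset
    have he₀H : e₀ ∉ H := fun h => h.2 rfl
    have hdeg : ∀ v, edeg G v ≤ 3 := by
      intro v
      by_cases hv : v ∈ vertsOf G
      · exact (h3 v hv).le
      · rw [edeg_eq_zero_of_not_mem hv]; omega
    suffices hind : (F.M n).Indep H from
      hind.subset fun e he => ⟨hD.1 he, fun h => he₀D (h ▸ he)⟩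
    refine lemA F hz n H (fun e he => hd e (hHsub he)) (fun v => le_trans (edeg_mono' hHsub v) (hdeg v)) ?_
    intro u hu
    induction e₀ using Sym2.ind with
    | _ x y =>
      have hxG : x ∈ vertsOf G := ⟨s(x, y), he₀G, Sym2.mem_mk_left _ _⟩
      have hyG : y ∈ vertsOf G := ⟨s(x, y), he₀G, Sym2.mem_mk_right _ _⟩
      have hdegH : ∀ a, a ∈ (s(x, y) : Sym2 (Fin n)) → edeg H a ≤ 2 := by
        intro a ha
        have h1 := edeg_del hHsub he₀G he₀H ha
        have h2 : edeg G a = 3 := h3 a ⟨s(x, y), he₀G, ha⟩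
        omega
      have hwalk := hconn u (vertsOf_mono' hHsub hu) x hxG
      rcases walk_del (H := H) hwalk with h | ⟨z, hzwalk, e, heG, heH, hze⟩
      · exact ⟨x, hdegH x (Sym2.mem_mk_left _ _), h⟩
      · have : e = s(x, y) := by
          by_contra hcon
          exact heH ⟨heG, hcon⟩
        subst this
        exact ⟨z, hdegH z hze, hzwalk⟩
end Aux
end

section
/- Every connected graph in which all vertices have degree at most 3 and at least one vertex has degree at most 2 is 2-degenerate. -/
lemma cross_lemma {V : Type*} {G : SimpleGraph V} {s : Finset V} [DecidableEq V] :
    ∀ {a b : V}, G.Walk a b → a ∈ s → b ∉ s →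
      ∃ v ∈ s, ∃ w, G.Adj v w ∧ w ∉ s := by
  intro a b p
  induction p with
  | nil => intro ha hb; exact absurd ha hb
  | cons h p ih =>
    rename_i a c b
    intro ha hb
    by_cases hc : c ∈ s
    · exact ih hc hb
    · exact ⟨a, ha, c, h, hc⟩

/-- Every connected graph with maximum degree at most 3 having a vertex of
degree at most 2 is 2-degenerate: every nonempty (induced) subgraph has a
vertex of degree at most 2. -/
theorem stmt10 {V : Type*} [Fintype V] [DecidableEq V] (G : SimpleGraph V)
    [DecidableRel G.Adj] (hconn : G.Connected)
    (hdeg : ∀ v : V, G.degree v ≤ 3) (hv : ∃ v : V, G.degree v ≤ 2) :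
    ∀ s : Finset V, s.Nonempty →
      ∃ v ∈ s, (G.neighborFinset v ∩ s).card ≤ 2 := by
  intro s hs
  by_cases hall : ∀ u : V, u ∈ s
  · obtain ⟨v, hv2⟩ := hv
    refine ⟨v, hall v, ?_⟩
    calc (G.neighborFinset v ∩ s).card ≤ (G.neighborFinset v).card :=
          Finset.card_le_card (Finset.inter_subset_left)
      _ ≤ 2 := hv2
  · push_neg at hall
    obtain ⟨u, hu⟩ := hall
    obtain ⟨a, ha⟩ := hs
    obtain ⟨p⟩ := hconn.preconnected a u
    obtain ⟨v, hvs, w, hadj, hws⟩ := cross_lemma p ha hu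
    refine ⟨v, hvs, ?_⟩
    have hsub : G.neighborFinset v ∩ s ⊆ (G.neighborFinset v).erase w := by
      intro x hx
      simp only [Finset.mem_inter] at hx
      refine Finset.mem_erase.mpr ⟨?_, hx.1⟩
      rintro rfl; exact hws hx.2
    have hw : w ∈ G.neighborFinset v := by
      simp [SimpleGraph.mem_neighborFinset, hadj]
    calc (G.neighborFinset v ∩ s).card ≤ ((G.neighborFinset v).erase w).card :=
          Finset.card_le_card hsub
      _ = (G.neighborFinset v).card - 1 := Finset.card_erase_of_mem hw
      _ ≤ 3 - 1 := Nat.sub_le_sub_right (hdeg v) 1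
      _ = 2 := rfl
end

section
/- (Tripling trick) Let M be a matroidal 2-rigidity family, let D be an M-circuit, and let v be a vertex of degree 3 in D. Then: (1) for any edge e of D not incident with v, the graph obtained from D by adding a new twin of v and deleting e is M-dependent; (2) for any degree-3 vertex w of D not adjacent to v, the graph obtained from D by adding a new twin of v and deleting w is M-dependent. -/
/-- `cloneAt D v`: the graph `D ⊕ v` obtained from `D` (pushed into
`Fin (n+1)` via `Fin.castSucc`) by adding the new vertex `Fin.last n` as a
twin of `v`, i.e. joined to exactly the neighbours of `v`. -/
def cloneAt {n : ℕ} (D : Set (Sym2 (Fin n))) (v : Fin n) :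
    Set (Sym2 (Fin (n + 1))) :=
  (Sym2.map Fin.castSucc '' D) ∪
    {e | ∃ u : Fin n, s(v, u) ∈ D ∧ e = s(Fin.last n, Fin.castSucc u)}

open Set

/-- Any independent subset of the union of two circuits whose intersection is
independent has small cardinality (a hand-rolled submodularity argument). -/
lemma indep_card_bound {β : Type*} {M : Matroid β} {A B I : Set β}
    (hA : IsCircuitIn M A) (hB : IsCircuitIn M B) (hK : M.Indep (A ∩ B))
    (hAf : A.Finite) (hBf : B.Finite)
    (hI : M.Indep I) (hIX : I ⊆ A ∪ B) :
    I.encard + (A ∩ B).encard + 2 ≤ A.encard + B.encard := by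
  have hXE : A ∪ B ⊆ M.E := union_subset hA.1.2 hB.1.2
  obtain ⟨J, hJ, hIJ⟩ := hI.subset_isBasis_of_subset hIX hXE
  obtain ⟨J', hJ', hKJ'⟩ := hK.subset_isBasis_of_subset
    (inter_subset_left.trans subset_union_left) hXE
  have hcard : J.encard = J'.encard := hJ.encard_eq_encard hJ'
  have hbound : ∀ C : Set β, IsCircuitIn M C → C.Finite →
      (J' ∩ C).encard + 1 ≤ C.encard := by
    intro C hCc hCf
    refine Order.add_one_le_of_lt ((hCf.subset inter_subset_right).encard_lt_encard ⟨inter_subset_right, fun hsub => ?_⟩)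
    exact hCc.1.1 (hJ'.indep.subset fun x hx => (hsub hx).1)
  have hsplit : J'.encard + (A ∩ B).encard = (J' ∩ A).encard + (J' ∩ B).encard := by
    have h1 : (J' ∩ A) ∪ (J' ∩ B) = J' := by
      rw [← inter_union_distrib_left]; exact inter_eq_left.mpr hJ'.subset
    have h2 : (J' ∩ A) ∩ (J' ∩ B) = A ∩ B := by
      rw [inter_inter_inter_comm, inter_self]
      exact inter_eq_right.mpr hKJ'
    rw [← encard_union_add_encard_inter (J' ∩ A) (J' ∩ B), h1, h2]
  have hIc : I.encard ≤ J'.encard := hcard ▸ encard_mono hIJ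
  calc I.encard + (A ∩ B).encard + 2 ≤ J'.encard + (A ∩ B).encard + 2 := by gcongr
    _ = (J' ∩ A).encard + (J' ∩ B).encard + 2 := by rw [hsplit]
    _ = ((J' ∩ A).encard + 1) + ((J' ∩ B).encard + 1) := by ring
    _ ≤ A.encard + B.encard := add_le_add (hbound A hA hAf) (hbound B hB hBf)

/-- Heredity of a rigidity family, stated for injective functions. -/
lemma indep_image' (F : RigFamily) {n m : ℕ} {f : Fin n → Fin m}
    (hf : Function.Injective f) (G : Set (Sym2 (Fin n))) :
    (F.M n).Indep G ↔ (F.M m).Indep (Sym2.map f '' G) := by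
  have := F.hered ⟨f, hf⟩ G
  simpa using this

/-- The image of a circuit under an injection of the vertex set is a circuit. -/
lemma circuit_image (F : RigFamily) {n m : ℕ} {f : Fin n → Fin m}
    (hf : Function.Injective f) {C : Set (Sym2 (Fin n))}
    (hC : IsCircuitIn (F.M n) C) : IsCircuitIn (F.M m) (Sym2.map f '' C) := by
  obtain ⟨⟨hCi, hCE⟩, hmin⟩ := hC
  constructor
  · refine ⟨fun h => hCi ((indep_image' F hf C).mpr h), ?_⟩
    rw [F.ground m]
    rintro _ ⟨e, he, rfl⟩
    have h1 : ¬ e.IsDiag := by have := hCE he; rwa [F.ground n] at this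
    simpa [Sym2.isDiag_map hf] using h1
  · intro S hS
    have hSsub : S ⊆ Sym2.map f '' C := hS.subset
    set T := {x ∈ C | Sym2.map f x ∈ S} with hT
    have hTS : Sym2.map f '' T = S := by
      apply subset_antisymm
      · rintro _ ⟨x, hx, rfl⟩; exact hx.2
      · intro s hs
        obtain ⟨x, hx, rfl⟩ := hSsub hs
        exact ⟨x, ⟨hx, hs⟩, rfl⟩
    have hTC : T ⊂ C := by
      refine ⟨fun x hx => hx.1, fun hCT => hS.2 ?_⟩
      rw [← hTS]; exact image_mono hCT
    rw [← hTS]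
    exact (indep_image' F hf T).mp (hmin T hTC)

/-- The tripling trick: if `D` is a circuit of a matroidal 2-rigidity family
with the 0-extension property and `v` has degree 3 in `D`, then
(1) for every edge `e` of `D` not incident with `v`, the graph `(D ⊕ v) - e`
is dependent; (2) for every degree-3 vertex `w` neither equal nor adjacent
to `v`, the graph `(D ⊕ v) - w` is dependent. -/
theorem stmt11 (F : RigFamily) (hz : ZeroExt F) (n : ℕ)
    (D : Set (Sym2 (Fin n))) (hC : IsCircuitIn (F.M n) D)
    (v : Fin n) (hv : edeg D v = 3) :
    (∀ e ∈ D, v ∉ e →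
      (F.M (n + 1)).Dep (cloneAt D v \ {Sym2.map Fin.castSucc e})) ∧
    (∀ w : Fin n, edeg D w = 3 → w ≠ v → s(v, w) ∉ D →
      (F.M (n + 1)).Dep {e ∈ cloneAt D v | Fin.castSucc w ∉ e}) := by
  classical
  have hnd : ∀ e ∈ D, ¬ e.IsDiag := by
    intro e he
    have := hC.1.2 he
    rwa [F.ground n] at this
  have hcsi : Function.Injective (Fin.castSucc : Fin n → Fin (n+1)) :=
    Fin.castSucc_injective n
  set g : Fin n → Fin (n+1) := fun u => if u = v then Fin.last n else Fin.castSucc u with hgdef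
  have hgi : Function.Injective g := by
    intro a b hab
    dsimp only [g] at hab
    split_ifs at hab with ha hb hb
    · rw [ha, hb]
    · exact absurd hab.symm (Fin.castSucc_lt_last b).ne
    · exact absurd hab (Fin.castSucc_lt_last a).ne
    · exact hcsi hab
  set A : Set (Sym2 (Fin (n+1))) := Sym2.map Fin.castSucc '' D with hAdef
  set B : Set (Sym2 (Fin (n+1))) := Sym2.map g '' D with hBdef
  set Ev : Set (Sym2 (Fin n)) := {e ∈ D | v ∈ e} with hEvdef
  set newE : Set (Sym2 (Fin (n+1))) :=
    {e | ∃ u : Fin n, s(v, u) ∈ D ∧ e = s(Fin.last n, Fin.castSucc u)} with hnewEdef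
  have hclone : cloneAt D v = A ∪ newE := rfl
  -- the map g agrees with castSucc on edges avoiding v
  have hg_nv : ∀ e : Sym2 (Fin n), v ∉ e → Sym2.map g e = Sym2.map Fin.castSucc e := by
    intro e hve
    apply Sym2.map_congr
    intro x hx
    have : x ≠ v := fun h => hve (h ▸ hx)
    simp [g, this]
  have hg_v : ∀ u : Fin n, s(v, u) ∈ D → Sym2.map g s(v, u) = s(Fin.last n, Fin.castSucc u) := by
    intro u hu
    have huv : v ≠ u := by
      have := hnd _ hu
      rwa [Sym2.mk_isDiag_iff] at this
    rw [Sym2.map_pair_eq]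
    simp [g, huv.symm]
  -- newE is the image of Ev under g
  have hnewB : newE = Sym2.map g '' Ev := by
    apply subset_antisymm
    · rintro x ⟨u, hu, rfl⟩
      exact ⟨s(v, u), ⟨hu, Sym2.mem_mk_left v u⟩, hg_v u hu⟩
    · rintro x ⟨e, ⟨heD, hev⟩, rfl⟩
      obtain ⟨u, rfl⟩ := Sym2.mem_iff_exists.mp hev
      exact ⟨u, heD, hg_v u heD⟩
  -- every edge of A avoids the last vertex
  have hlastA : ∀ x ∈ A, Fin.last n ∉ x := by
    rintro _ ⟨d, hd, rfl⟩ hmem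
    obtain ⟨a, _, ha⟩ := Sym2.mem_map.mp hmem
    exact (Fin.castSucc_lt_last a).ne ha
  have hlast_newE : ∀ x ∈ newE, Fin.last n ∈ x := by
    rintro _ ⟨u, _, rfl⟩
    exact Sym2.mem_mk_left _ _
  have hdisj : Disjoint A newE :=
    Set.disjoint_left.mpr fun x hxA hxN => hlastA x hxA (hlast_newE x hxN)
  -- the union description
  have hBsub : B ⊆ A ∪ newE := by
    rintro _ ⟨d, hd, rfl⟩
    by_cases hvd : v ∈ d
    · obtain ⟨u, rfl⟩ := Sym2.mem_iff_exists.mp hvd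
      exact Or.inr ⟨u, hd, hg_v u hd⟩
    · exact Or.inl ⟨d, hd, (hg_nv d hvd).symm⟩
  have hXAB : cloneAt D v = A ∪ B := by
    rw [hclone]
    apply subset_antisymm
    · apply union_subset subset_union_left
      rw [hnewB]
      exact (image_mono (sep_subset _ _)).trans subset_union_right
    · exact union_subset subset_union_left hBsub
  -- the intersection description
  have hABK : A ∩ B = Sym2.map Fin.castSucc '' (D \ Ev) := by
    apply subset_antisymm
    · rintro x ⟨⟨d, hd, rfl⟩, hxB⟩
      refine ⟨d, ⟨hd, fun hdEv => ?_⟩, rfl⟩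
      have hcsv : Fin.castSucc v ∈ Sym2.map Fin.castSucc d :=
        Sym2.mem_map.mpr ⟨v, hdEv.2, rfl⟩
      obtain ⟨d', hd', hmap⟩ := hxB
      by_cases hvd' : v ∈ d'
      · obtain ⟨u', rfl⟩ := Sym2.mem_iff_exists.mp hvd'
        rw [hg_v u' hd'] at hmap
        rw [← hmap] at hcsv
        rcases Sym2.mem_iff.mp hcsv with h | h
        · exact (Fin.castSucc_lt_last v).ne h
        · have hvu : v = u' := hcsi h
          have hd'' := hnd _ hd'
          rw [Sym2.mk_isDiag_iff] at hd''
          exact hd'' hvu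
      · rw [hg_nv d' hvd'] at hmap
        rw [← hmap] at hcsv
        obtain ⟨a, ha, haa⟩ := Sym2.mem_map.mp hcsv
        exact hvd' (hcsi haa ▸ ha)
    · rintro _ ⟨d, ⟨hd, hdEv⟩, rfl⟩
      have hvd : v ∉ d := fun h => hdEv ⟨hd, h⟩
      exact ⟨⟨d, hd, rfl⟩, ⟨d, hd, hg_nv d hvd⟩⟩
  -- circuits
  have hAc : IsCircuitIn (F.M (n+1)) A := circuit_image F hcsi hC
  have hBc : IsCircuitIn (F.M (n+1)) B := circuit_image F hgi hC
  -- independence of the intersection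
  have hEv3 : Ev.ncard = 3 := hv
  have hEvne : Ev.Nonempty :=
    Set.nonempty_of_ncard_ne_zero (by rw [hEv3]; exact three_ne_zero)
  have hKssub : D \ Ev ⊂ D := by
    obtain ⟨e0, he0⟩ := hEvne
    exact ⟨diff_subset, fun hsub => (hsub he0.1).2 he0⟩
  have hKindep : (F.M (n+1)).Indep (A ∩ B) := by
    rw [hABK]
    exact (indep_image' F hcsi _).mp (hC.2 _ hKssub)
  -- cardinalities
  set m : ℕ := (D \ Ev).ncard with hmdef
  have hKenc : (D \ Ev).encard = (m : ℕ∞) := ((D \ Ev).toFinite.cast_ncard_eq).symm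
  have hEvenc : Ev.encard = (3 : ℕ∞) := by
    rw [← Ev.toFinite.cast_ncard_eq, hEv3]; rfl
  have hDenc : D.encard = ((m + 3 : ℕ) : ℕ∞) := by
    rw [← diff_union_of_subset (fun e (he : e ∈ Ev) => he.1 : Ev ⊆ D),
      encard_union_eq disjoint_sdiff_left, hKenc, hEvenc]
    push_cast; ring
  have hAenc : A.encard = ((m + 3 : ℕ) : ℕ∞) := by
    rw [hAdef, (Sym2.map.injective hcsi).encard_image, hDenc]
  have hBenc : B.encard = ((m + 3 : ℕ) : ℕ∞) := by
    rw [hBdef, (Sym2.map.injective hgi).encard_image, hDenc]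
  have hABenc : (A ∩ B).encard = (m : ℕ∞) := by
    rw [hABK, (Sym2.map.injective hcsi).encard_image, hKenc]
  have hnewEenc : newE.encard = (3 : ℕ∞) := by
    rw [hnewB, (Sym2.map.injective hgi).encard_image, hEvenc]
  have hXenc : (cloneAt D v).encard = ((m + 6 : ℕ) : ℕ∞) := by
    rw [hclone, encard_union_eq hdisj, hAenc, hnewEenc]
    push_cast; ring
  -- every edge of the clone is a non-loop
  have hXnd : cloneAt D v ⊆ {e : Sym2 (Fin (n+1)) | ¬ e.IsDiag} := by
    rw [hXAB]
    rintro x (⟨d, hd, rfl⟩ | ⟨d, hd, rfl⟩)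
    · simpa [Sym2.isDiag_map hcsi] using hnd d hd
    · simpa [Sym2.isDiag_map hgi] using hnd d hd
  -- Part (1)
  have part1 : ∀ e ∈ D, v ∉ e →
      (F.M (n + 1)).Dep (cloneAt D v \ {Sym2.map Fin.castSucc e}) := by
    intro e he hve
    have he'X : Sym2.map Fin.castSucc e ∈ cloneAt D v := Or.inl ⟨e, he, rfl⟩
    constructor
    · intro hIind
      have hle := indep_card_bound hAc hBc hKindep (toFinite A) (toFinite B) hIind
        (by rw [← hXAB]; exact diff_subset)
      have hIenc : (cloneAt D v \ {Sym2.map Fin.castSucc e}).encard = ((m + 5 : ℕ) : ℕ∞) := by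
        have h1 : (cloneAt D v \ {Sym2.map Fin.castSucc e}).encard + 1
            = ((m + 5 : ℕ) : ℕ∞) + 1 := by
          rw [encard_diff_singleton_add_one he'X, hXenc]; push_cast; ring
        exact ENat.add_left_injective_of_ne_top ENat.one_ne_top h1
      rw [hIenc, hABenc, hAenc, hBenc] at hle
      have : m + 5 + m + 2 ≤ m + 3 + (m + 3) := by exact_mod_cast hle
      omega
    · rw [F.ground (n+1)]
      exact diff_subset.trans hXnd
  refine ⟨part1, ?_⟩
  -- Part (2)
  intro w hw3 hwv hvwD
  set Ew : Set (Sym2 (Fin n)) := {e ∈ D | w ∈ e} with hEwdef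
  obtain ⟨p, q, r, hpq, hpr, hqr, hEw0⟩ := Set.ncard_eq_three.mp (hw3 : Ew.ncard = 3)
  have hEw : Ew = {p, q, r} := hEw0
  have hpEw : p ∈ Ew := by rw [hEw]; exact Or.inl rfl
  have hqEw : q ∈ Ew := by rw [hEw]; exact Or.inr (Or.inl rfl)
  have hrEw : r ∈ Ew := by rw [hEw]; exact Or.inr (Or.inr rfl)
  obtain ⟨a1, hp⟩ := Sym2.mem_iff_exists.mp hpEw.2
  obtain ⟨a2, hq⟩ := Sym2.mem_iff_exists.mp hqEw.2
  obtain ⟨a3, hr⟩ := Sym2.mem_iff_exists.mp hrEw.2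
  have ha1w : w ≠ a1 := by
    have := hnd _ hpEw.1; rw [hp, Sym2.mk_isDiag_iff] at this; exact this
  have ha2w : w ≠ a2 := by
    have := hnd _ hqEw.1; rw [hq, Sym2.mk_isDiag_iff] at this; exact this
  have hvr : v ∉ r := by
    intro hvrmem
    rw [hr] at hvrmem
    rcases Sym2.mem_iff.mp hvrmem with h | h
    · exact hwv h.symm
    · apply hvwD
      have : r = s(v, w) := by rw [hr, ← h]; exact Sym2.eq_swap
      exact this ▸ hrEw.1
  -- characterization of the edges of the clone at castSucc w
  have hinc : ∀ x ∈ cloneAt D v, Fin.castSucc w ∈ x →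
      ∃ d ∈ Ew, x = Sym2.map Fin.castSucc d := by
    rintro x (⟨d, hd, rfl⟩ | ⟨u, hu, rfl⟩) hmem
    · obtain ⟨a, ha, haa⟩ := Sym2.mem_map.mp hmem
      exact ⟨d, ⟨hd, hcsi haa ▸ ha⟩, rfl⟩
    · rcases Sym2.mem_iff.mp hmem with h | h
      · exact absurd h (Fin.castSucc_lt_last w).ne
      · exact absurd ((hcsi h) ▸ hu) hvwD
  set I2 : Set (Sym2 (Fin (n+1))) := {e ∈ cloneAt D v | Fin.castSucc w ∉ e} with hI2def
  have hsplit : cloneAt D v \ {Sym2.map Fin.castSucc r}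
      = I2 ∪ {s(Fin.castSucc w, Fin.castSucc a1), s(Fin.castSucc w, Fin.castSucc a2)} := by
    have hcp : Sym2.map Fin.castSucc p = s(Fin.castSucc w, Fin.castSucc a1) := by
      rw [hp, Sym2.map_pair_eq]
    have hcq : Sym2.map Fin.castSucc q = s(Fin.castSucc w, Fin.castSucc a2) := by
      rw [hq, Sym2.map_pair_eq]
    apply subset_antisymm
    · rintro x ⟨hxX, hxr⟩
      by_cases hwx : Fin.castSucc w ∈ x
      · obtain ⟨d, hdEw, rfl⟩ := hinc x hxX hwx
        rw [hEw] at hdEw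
        rcases hdEw with rfl | rfl | rfl
        · exact Or.inr (hcp ▸ Or.inl rfl)
        · exact Or.inr (hcq ▸ Or.inr rfl)
        · exact absurd rfl hxr
      · exact Or.inl ⟨hxX, hwx⟩
    · rintro x (⟨hxX, hwx⟩ | hx)
      · exact ⟨hxX, fun h => hwx (by rw [h]; exact Sym2.mem_map.mpr ⟨w, hrEw.2, rfl⟩)⟩
      · have hmapinj := Sym2.map.injective hcsi
        rcases hx with rfl | rfl
        · rw [← hcp]
          exact ⟨Or.inl ⟨p, hpEw.1, rfl⟩, fun h => hpr (hmapinj (mem_singleton_iff.mp h))⟩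
        · rw [← hcq]
          exact ⟨Or.inl ⟨q, hqEw.1, rfl⟩, fun h => hqr (hmapinj (mem_singleton_iff.mp h))⟩
  constructor
  · intro h2
    have hnv : Fin.castSucc w ∉ vertsOf I2 := by
      rintro ⟨e, he, hmem⟩
      exact he.2 hmem
    have h3 := hz (n+1) I2 (Fin.castSucc w) (Fin.castSucc a1) (Fin.castSucc a2) hnv
      (fun h => ha1w (hcsi h)) (fun h => ha2w (hcsi h)) h2
    rw [← hsplit] at h3
    exact (part1 r hrEw.1 hvr).1 h3
  · rw [F.ground (n+1)]
    exact (fun x (hx : x ∈ I2) => hXnd hx.1)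
end

section
/- Every circuit C of a matroidal 2-rigidity family M that is not a circuit of the generic plane rigidity matroid family R is R-independent; consequently |C| ≤ 2·v(C) - 3 and C has at least six vertices of degree exactly 3. -/
/-- A circuit of the generic plane rigidity matroid family `R`: a
Laman-dependent graph all of whose proper subgraphs satisfy the Laman
condition. -/
def RCircuit {n : ℕ} (C : Set (Sym2 (Fin n))) : Prop :=
  (∀ e ∈ C, ¬ e.IsDiag) ∧ ¬ Laman C ∧
    ∀ D : Set (Sym2 (Fin n)), D ⊂ C → Laman D

namespace Stmt12Aux

open Set

variable {F : RigFamily}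

lemma indep_ncard_le {m : ℕ} (hm : 2 ≤ m) {I : Set (Sym2 (Fin m))}
    (hI : (F.M m).Indep I) : I.ncard ≤ 2 * m - 3 := by
  obtain ⟨B, hB, hIB⟩ := hI.exists_isBase_superset
  calc I.ncard ≤ B.ncard := Set.ncard_le_ncard hIB (Set.toFinite B)
    _ = 2 * m - 3 := F.rank m hm B hB

lemma laman_of_indep {n : ℕ} {G : Set (Sym2 (Fin n))} (hG : (F.M n).Indep G) :
    Laman G := by
  intro U hU
  set m := U.card with hm
  let g : Fin m ≃o {x // x ∈ U} := U.orderIsoOfFin rfl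
  let f : Fin m ↪ Fin n :=
    ⟨fun i => (g i : Fin n), fun i j hij => g.injective (Subtype.ext hij)⟩
  have hfU : ∀ i, f i ∈ U := fun i => (g i).2
  set H : Set (Sym2 (Fin m)) := Sym2.map (⇑f) ⁻¹' G with hH
  have himg : Sym2.map (⇑f) '' H = {e ∈ G | ∀ v ∈ e, v ∈ U} := by
    apply Set.Subset.antisymm
    · rintro e ⟨e', he', rfl⟩
      refine ⟨he', fun v hv => ?_⟩
      rw [Sym2.mem_map] at hv
      obtain ⟨a, -, rfl⟩ := hv
      exact hfU a
    · rintro e ⟨heG, hUe⟩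
      induction e using Sym2.ind with
      | _ x y =>
        obtain ⟨i, hi⟩ := g.surjective ⟨x, hUe x (Sym2.mem_mk_left x y)⟩
        obtain ⟨j, hj⟩ := g.surjective ⟨y, hUe y (Sym2.mem_mk_right x y)⟩
        have hfi : f i = x := congrArg Subtype.val hi
        have hfj : f j = y := congrArg Subtype.val hj
        refine ⟨s(i, j), ?_, ?_⟩
        · show Sym2.map (⇑f) s(i, j) ∈ G
          rw [Sym2.map_pair_eq, hfi, hfj]; exact heG
        · rw [Sym2.map_pair_eq, hfi, hfj]
  have hHind : (F.M m).Indep H :=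
    (F.hered f H).mpr (hG.subset (by rw [himg]; exact Set.sep_subset _ _))
  have hcard : {e ∈ G | ∀ v ∈ e, v ∈ U}.ncard = H.ncard := by
    rw [← himg, Set.ncard_image_of_injective _ (Sym2.map.injective f.injective)]
  rw [hcard]
  exact indep_ncard_le hU hHind

end Stmt12Aux

namespace Stmt12Aux

lemma zero_ext {m : ℕ} (hm : 2 ≤ m) {F : RigFamily} {D : Set (Sym2 (Fin (m+1)))}
    {v a b : Fin (m+1)} (hD : (F.M (m+1)).Indep D) (hvD : ∀ e ∈ D, v ∉ e)
    (hva : v ≠ a) (hvb : v ≠ b) (hab : a ≠ b) :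
    (F.M (m+1)).Indep (D ∪ {s(v,a), s(v,b)}) := by
  set N := F.M (m+1) with hN
  have hE : N.E = {e : Sym2 (Fin (m+1)) | ¬ e.IsDiag} := F.ground (m+1)
  set g : Fin m ↪ Fin (m+1) := Fin.succAboveEmb v with hg
  have hgv : ∀ i, g i ≠ v := by
    intro i h
    have : g i ∈ Set.range (v.succAbove) := ⟨i, rfl⟩
    rw [Fin.range_succAbove] at this
    exact this h
  set EW : Set (Sym2 (Fin (m+1))) := {e | ¬ e.IsDiag ∧ v ∉ e} with hEW
  have hEWE : EW ⊆ N.E := by rw [hE]; exact fun e he => he.1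
  -- edges avoiding v are in the range of `Sym2.map g`
  have hrange : ∀ e : Sym2 (Fin (m+1)), v ∉ e → e ∈ Set.range (Sym2.map (⇑g)) := by
    intro e hve
    induction e using Sym2.ind with
    | _ x y =>
      have hx : x ∈ Set.range (v.succAbove) := by
        rw [Fin.range_succAbove]; exact fun h => hve (h ▸ Sym2.mem_mk_left x y)
      have hy : y ∈ Set.range (v.succAbove) := by
        rw [Fin.range_succAbove]; exact fun h => hve (h ▸ Sym2.mem_mk_right x y)
      obtain ⟨i, rfl⟩ := hx
      obtain ⟨j, rfl⟩ := hy
      exact ⟨s(i, j), by rw [Sym2.map_pair_eq]; rfl⟩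
  have havoid : ∀ (X : Set (Sym2 (Fin m))) (e : Sym2 (Fin (m+1))),
      e ∈ Sym2.map (⇑g) '' X → v ∉ e := by
    rintro X e ⟨e', -, rfl⟩ hvmem
    rw [Sym2.mem_map] at hvmem
    obtain ⟨w, -, hw⟩ := hvmem
    exact hgv w hw
  -- any independent subset of EW has at most 2m-3 edges
  have hsubEW : ∀ I : Set (Sym2 (Fin (m+1))), N.Indep I → I ⊆ EW →
      I.ncard ≤ 2 * m - 3 := by
    intro I hI hIEW
    have hIr : I ⊆ Set.range (Sym2.map (⇑g)) := fun e he => hrange e (hIEW he).2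
    have himg : Sym2.map (⇑g) '' (Sym2.map (⇑g) ⁻¹' I) = I :=
      Set.image_preimage_eq_iff.mpr hIr
    have hH : (F.M m).Indep (Sym2.map (⇑g) ⁻¹' I) := by
      rw [F.hered g, himg]; exact hI
    have := indep_ncard_le (F := F) hm hH
    rwa [← himg, Set.ncard_image_of_injective _ (Sym2.map.injective g.injective)]
  -- EW contains an independent set of size 2m-3
  obtain ⟨B', hB'⟩ := (F.M m).exists_isBase
  have hB'E := hB'.indep.subset_ground
  set I₀ : Set (Sym2 (Fin (m+1))) := Sym2.map (⇑g) '' B' with hI₀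
  have hI₀ind : N.Indep I₀ := by rw [hN, ← F.hered g]; exact hB'.indep
  have hI₀EW : I₀ ⊆ EW := by
    rintro e he
    refine ⟨?_, havoid B' e he⟩
    obtain ⟨e', he', rfl⟩ := he
    rw [Sym2.isDiag_map g.injective]
    have := hB'E he'
    rw [F.ground m] at this
    exact this
  have hI₀card : I₀.ncard = 2 * m - 3 := by
    rw [hI₀, Set.ncard_image_of_injective _ (Sym2.map.injective g.injective)]
    exact F.rank m hm B' hB'
  -- every basis of EW has exactly 2m-3 edges
  have hbasisEW : ∀ B0 : Set (Sym2 (Fin (m+1))), N.IsBasis B0 EW →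
      B0.ncard = 2 * m - 3 := by
    intro B0 hB0
    refine le_antisymm (hsubEW B0 hB0.indep hB0.subset) ?_
    obtain ⟨B4, hB4, hI₀B4⟩ := hI₀ind.subset_isBasis_of_subset hI₀EW hEWE
    have h44 : B4.ncard = B0.ncard := by
      have := hB4.encard_eq_encard hB0
      rw [Set.ncard_def, Set.ncard_def, this]
    rw [← hI₀card, ← h44]
    exact Set.ncard_le_ncard hI₀B4 (Set.toFinite B4)
  -- a basis of EW, extended to a base of N
  obtain ⟨B2, hB2⟩ := N.exists_isBasis EW hEWE
  obtain ⟨B3, hB3, hB2B3⟩ := hB2.indep.exists_isBase_superset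
  have hB3card : B3.ncard = 2 * m - 1 := by
    have := F.rank (m+1) (by omega) B3 hB3
    omega
    -- 2*(m+1)-3 = 2m-1

  -- the elements of B3 \ B2 are two edges at v
  have hdiffv : ∀ e ∈ B3 \ B2, v ∈ e := by
    rintro e ⟨heB3, heB2⟩
    by_contra hve
    have heEW : e ∈ EW := by
      refine ⟨?_, hve⟩
      have := hB3.indep.subset_ground heB3
      rw [hE] at this; exact this
    exact heB2 (hB2.mem_of_insert_indep heEW
      (hB3.indep.subset (Set.insert_subset heB3 hB2B3)))
  have hB2card : B2.ncard = 2 * m - 3 := hbasisEW B2 hB2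
  have hdcard : (B3 \ B2).ncard = 2 := by
    rw [Set.ncard_diff hB2B3 (Set.toFinite B2)]
    omega
  obtain ⟨e1, e2, he12, hpair⟩ := Set.ncard_eq_two.mp hdcard
  have he1 : e1 ∈ B3 \ B2 := by rw [hpair]; exact Set.mem_insert _ _
  have he2 : e2 ∈ B3 \ B2 := by rw [hpair]; exact Set.mem_insert_of_mem _ rfl
  have hnd3 : ∀ e ∈ B3, ¬ e.IsDiag := by
    intro e he
    have := hB3.indep.subset_ground he
    rw [hE] at this; exact this
  obtain ⟨x, hx⟩ := Sym2.mem_iff_exists.mp (hdiffv e1 he1)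
  obtain ⟨y, hy⟩ := Sym2.mem_iff_exists.mp (hdiffv e2 he2)
  have hvx : v ≠ x := by
    intro h; exact hnd3 e1 he1.1 (by rw [hx, ← h]; exact Sym2.diag_isDiag v)
  have hvy : v ≠ y := by
    intro h; exact hnd3 e2 he2.1 (by rw [hy, ← h]; exact Sym2.diag_isDiag v)
  have hxy : x ≠ y := by
    intro h; exact he12 (by rw [hx, hy, h])
  -- a permutation fixing v with x ↦ a, y ↦ b
  set s1 : Equiv.Perm (Fin (m+1)) := Equiv.swap x a with hs1
  set s2 : Equiv.Perm (Fin (m+1)) := Equiv.swap (s1 y) b with hs2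
  set sg : Equiv.Perm (Fin (m+1)) := s1.trans s2 with hsg
  have hs1v : s1 v = v := Equiv.swap_apply_of_ne_of_ne hvx hva
  have hvs1y : v ≠ s1 y := by
    intro h
    have h2 : s1 v = s1 y := by rw [hs1v, ← h]
    exact hvy (s1.injective h2)
  have hsgv : sg v = v := by
    rw [hsg, Equiv.trans_apply, hs1v, hs2]
    exact Equiv.swap_apply_of_ne_of_ne hvs1y hvb
  have hsgx : sg x = a := by
    rw [hsg, Equiv.trans_apply, Equiv.swap_apply_left, hs2]
    refine Equiv.swap_apply_of_ne_of_ne ?_ hab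
    intro h
    have : s1 x = s1 y := by rw [Equiv.swap_apply_left, h]
    exact hxy (s1.injective this)
  have hsgy : sg y = b := by
    rw [hsg, Equiv.trans_apply, hs2, Equiv.swap_apply_left]
  -- image of B3 under sg is a base contained in EW ∪ {va, vb}
  set B5 : Set (Sym2 (Fin (m+1))) := Sym2.map (⇑sg) '' B3 with hB5
  have hB5ind : N.Indep B5 := by
    have := (F.hered sg.toEmbedding B3).mp (by rw [← hN]; exact hB3.indep)
    simpa [hB5] using this
  have hB5card : B5.ncard = 2 * m - 1 := by
    rw [hB5, Set.ncard_image_of_injective _ (Sym2.map.injective sg.injective)]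
    exact hB3card
  have hB5base : N.IsBase B5 := by
    obtain ⟨B6, hB6, hB5B6⟩ := hB5ind.exists_isBase_superset
    have hB6card : B6.ncard = 2 * m - 1 := by
      have := F.rank (m+1) (by omega) B6 hB6
      omega
    have : B5 = B6 :=
      Set.eq_of_subset_of_ncard_le hB5B6 (by rw [hB5card, hB6card]) (Set.toFinite B6)
    rw [this]; exact hB6
  have hB3split : B3 = B2 ∪ (B3 \ B2) := by
    rw [Set.union_diff_cancel hB2B3]
  have hB5sub : B5 ⊆ EW ∪ {s(v,a), s(v,b)} := by
    rintro e ⟨e', he', rfl⟩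
    rw [hB3split] at he'
    rcases he' with he' | he'
    · left
      constructor
      · rw [Sym2.isDiag_map sg.injective]
        exact (hB2.subset he').1
      · intro hvmem
        rw [Sym2.mem_map] at hvmem
        obtain ⟨w, hw, hww⟩ := hvmem
        have : w = v := sg.injective (by rw [hww, hsgv])
        exact (hB2.subset he').2 (this ▸ hw)
    · right
      rw [hpair] at he'
      rcases he' with rfl | he'
      · rw [hx, Sym2.map_pair_eq, hsgv, hsgx]
        exact Set.mem_insert _ _
      · rw [Set.mem_singleton_iff] at he'
        subst he'
        rw [hy, Sym2.map_pair_eq, hsgv, hsgy]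
        exact Set.mem_insert_of_mem _ rfl
  -- extend D to a basis B0 of EW, then to a basis B1 of EW ∪ {va, vb}
  have hDEW : D ⊆ EW := by
    intro e he
    refine ⟨?_, hvD e he⟩
    have := hD.subset_ground he
    rw [hE] at this; exact this
  obtain ⟨B0, hB0, hDB0⟩ := hD.subset_isBasis_of_subset hDEW hEWE
  have hB0card : B0.ncard = 2 * m - 3 := hbasisEW B0 hB0
  have hXE : EW ∪ {s(v,a), s(v,b)} ⊆ N.E := by
    rw [hE]
    rintro e (he | he)
    · exact he.1
    · rcases he with rfl | he
      · rw [Set.mem_setOf_eq, Sym2.mk_isDiag_iff]; exact hva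
      · rw [Set.mem_singleton_iff] at he; subst he
        rw [Set.mem_setOf_eq, Sym2.mk_isDiag_iff]; exact hvb
  obtain ⟨B1, hB1, hB0B1⟩ := hB0.indep.subset_isBasis_of_subset
    (hB0.subset.trans Set.subset_union_left) hXE
  have hB1base : N.IsBase B1 := hB5base.isBase_of_isBasis_superset hB5sub hB1
  have hB1card : B1.ncard = 2 * m - 1 := by
    have := F.rank (m+1) (by omega) B1 hB1base
    omega
  have hB1sub : B1 ⊆ B0 ∪ {s(v,a), s(v,b)} := by
    intro e he
    rcases hB1.subset he with heEW | hepair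
    · left
      exact hB0.mem_of_insert_indep heEW
        (hB1.indep.subset (Set.insert_subset he hB0B1))
    · right; exact hepair
  have hle : (B0 ∪ {s(v,a), s(v,b)}).ncard ≤ B1.ncard := by
    have h1 : (B0 ∪ {s(v,a), s(v,b)} : Set _) = insert s(v,a) (insert s(v,b) B0) := by
      rw [Set.union_comm]
      simp [Set.insert_union]
    rw [h1, hB1card]
    have := Set.ncard_insert_le s(v,a) (insert s(v,b) B0)
    have := Set.ncard_insert_le s(v,b) B0
    omega
  have hB1eq : B1 = B0 ∪ {s(v,a), s(v,b)} :=
    Set.eq_of_subset_of_ncard_le hB1sub hle (Set.toFinite _)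
  have : D ∪ {s(v,a), s(v,b)} ⊆ B1 := by
    rw [hB1eq]
    exact Set.union_subset_union_left _ hDB0
  exact hB1base.indep.subset this

end Stmt12Aux

namespace Stmt12Aux

lemma fin2_edge (e : Sym2 (Fin 2)) (he : ¬ e.IsDiag) : e = s(0, 1) := by
  induction e using Sym2.ind with
  | _ x y =>
    rw [Sym2.mk_isDiag_iff] at he
    fin_cases x <;> fin_cases y <;> simp_all

lemma circuit_mindeg {n : ℕ} {F : RigFamily} {C : Set (Sym2 (Fin n))}
    (hC : IsCircuitIn (F.M n) C) {v : Fin n} (hv : v ∈ vertsOf C) :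
    3 ≤ edeg C v := by
  have hE := F.ground n
  have hCE : C ⊆ (F.M n).E := hC.1.subset_ground
  have hnd : ∀ e ∈ C, ¬ e.IsDiag := by
    intro e he; have := hCE he; rw [hE] at this; exact this
  obtain ⟨e0, he0C, hve0⟩ := hv
  -- first: n ≥ 3
  have hn3 : 3 ≤ n := by
    by_contra hn
    -- n ≤ 2; the edge e0 gives two distinct vertices, so n = 2
    induction e0 using Sym2.ind with
    | _ p q =>
      have hpq : p ≠ q := by
        have := hnd _ he0C; rwa [Sym2.mk_isDiag_iff] at this
      have h2n : 2 ≤ n := by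
        have : 1 < Fintype.card (Fin n) := Fintype.one_lt_card_iff_nontrivial.mpr ⟨p, q, hpq⟩
        simp at this; omega
      have hn2 : n = 2 := by omega
      subst hn2
      obtain ⟨B, hB⟩ := (F.M 2).exists_isBase
      have hBcard : B.ncard = 1 := F.rank 2 le_rfl B hB
      obtain ⟨eB, hBe⟩ := Set.ncard_eq_one.mp hBcard
      have heB : eB = s(0, 1) := by
        apply fin2_edge
        have := hB.indep.subset_ground (hBe ▸ Set.mem_singleton eB)
        rw [hE] at this; exact this
      have hCB : C ⊆ B := by
        intro e he
        rw [hBe, heB, Set.mem_singleton_iff]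
        exact fin2_edge e (hnd e he)
      exact hC.1.not_indep (hB.indep.subset hCB)
  obtain ⟨m, rfl⟩ : ∃ m, n = m + 1 := ⟨n - 1, by omega⟩
  have hm : 2 ≤ m := by omega
  by_contra hdeg
  have hS2 : {e ∈ C | v ∈ e}.ncard ≤ 2 := by
    unfold edeg at hdeg; omega
  set S : Set (Sym2 (Fin (m+1))) := {e ∈ C | v ∈ e} with hS
  set D : Set (Sym2 (Fin (m+1))) := {e ∈ C | v ∉ e} with hD
  have hDC : D ⊂ C := by
    constructor
    · exact Set.sep_subset _ _
    · intro hsub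
      exact (hsub he0C).2 hve0
  have hDind := hC.2 D hDC
  have hvD : ∀ e ∈ D, v ∉ e := fun e he => he.2
  have he0S : e0 ∈ S := ⟨he0C, hve0⟩
  have hrep : ∀ e ∈ S, ∃ x, v ≠ x ∧ e = s(v, x) := by
    intro e he
    obtain ⟨x, hx⟩ := Sym2.mem_iff_exists.mp he.2
    refine ⟨x, ?_, hx⟩
    intro h
    exact hnd e he.1 (by rw [hx, ← h]; exact Sym2.diag_isDiag v)
  obtain ⟨a, hva, hea⟩ := hrep e0 he0S
  obtain ⟨b, hvb, hab, hSsub⟩ :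
      ∃ b, v ≠ b ∧ a ≠ b ∧ S ⊆ {s(v, a), s(v, b)} := by
    by_cases hS1 : ∃ f ∈ S, f ≠ e0
    · obtain ⟨f, hfS, hfe0⟩ := hS1
      obtain ⟨b, hvb, hfb⟩ := hrep f hfS
      refine ⟨b, hvb, ?_, ?_⟩
      · intro h; exact hfe0 (by rw [hfb, hea, h])
      · have hsub : ({e0, f} : Set _) ⊆ S := by
          intro e he; rcases he with rfl | he
          · exact he0S
          · rw [Set.mem_singleton_iff] at he; subst he; exact hfS
        have : ({e0, f} : Set _) = S :=
          Set.eq_of_subset_of_ncard_le hsub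
            (by rw [Set.ncard_pair (Ne.symm hfe0)]; exact hS2) (Set.toFinite S)
        rw [← this, hea, hfb]
    · push_neg at hS1
      have hS0 : S ⊆ {s(v, a)} := by
        intro e he; rw [Set.mem_singleton_iff, hS1 e he, hea]
      have hbig : (({v, a} : Finset (Fin (m+1)))ᶜ).Nonempty := by
        rw [← Finset.card_pos, Finset.card_compl]
        have h1 : ({v, a} : Finset (Fin (m+1))).card ≤ 2 := by
          apply le_trans (Finset.card_insert_le _ _); simp
        have h2 : Fintype.card (Fin (m+1)) = m + 1 := by simp
        omega
      obtain ⟨b, hb⟩ := hbig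
      rw [Finset.mem_compl, Finset.mem_insert] at hb
      push_neg at hb
      simp only [Finset.mem_singleton] at hb
      refine ⟨b, Ne.symm hb.1, Ne.symm hb.2, ?_⟩
      exact hS0.trans (Set.singleton_subset_iff.mpr (Set.mem_insert _ _))
  have hCsub : C ⊆ D ∪ {s(v, a), s(v, b)} := by
    intro e he
    by_cases hvmem : v ∈ e
    · exact Or.inr (hSsub ⟨he, hvmem⟩)
    · exact Or.inl ⟨he, hvmem⟩
  have := (zero_ext hm hDind hvD hva hvb hab).subset hCsub
  exact hC.1.not_indep this

end Stmt12Aux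

/-- Every circuit of a matroidal 2-rigidity family which is not an
`R`-circuit is `R`-independent; in particular it has at most `2v - 3` edges
and at least six vertices of degree exactly 3. -/
theorem stmt12 (F : RigFamily) (n : ℕ) (C : Set (Sym2 (Fin n)))
    (hC : IsCircuitIn (F.M n) C) (hnotR : ¬ RCircuit C) :
    Laman C ∧ C.ncard ≤ 2 * (vertsOf C).ncard - 3 ∧
      6 ≤ {v : Fin n | v ∈ vertsOf C ∧ edeg C v = 3}.ncard := by
  classical
  have hE := F.ground n
  have hCE : C ⊆ (F.M n).E := hC.1.subset_ground
  have hnd : ∀ e ∈ C, ¬ e.IsDiag := fun e he => by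
    have := hCE he; rwa [hE] at this
  have hLam : Laman C := by
    by_contra h
    exact hnotR ⟨hnd, h, fun D hD => Stmt12Aux.laman_of_indep (hC.2 D hD)⟩
  have hCne : C.Nonempty := by
    rcases Set.eq_empty_or_nonempty C with rfl | h
    · exact absurd (F.M n).empty_indep hC.1.not_indep
    · exact h
  obtain ⟨e0, he0⟩ := hCne
  have hVfin : (vertsOf C).Finite := Set.toFinite _
  set Vf : Finset (Fin n) := hVfin.toFinset with hVf
  have hmemVf : ∀ w, w ∈ Vf ↔ w ∈ vertsOf C := fun w => Set.Finite.mem_toFinset hVfin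
  have hVcard : (vertsOf C).ncard = Vf.card := Set.ncard_eq_toFinset_card _ hVfin
  have hV2 : 2 ≤ Vf.card := by
    clear hLam
    induction e0 using Sym2.ind with
    | _ p q =>
      have hpq : p ≠ q := by
        have := hnd _ he0; rwa [Sym2.mk_isDiag_iff] at this
      have hp : p ∈ Vf := (hmemVf p).mpr ⟨s(p, q), he0, Sym2.mem_mk_left p q⟩
      have hq : q ∈ Vf := (hmemVf q).mpr ⟨s(p, q), he0, Sym2.mem_mk_right p q⟩
      calc 2 = ({p, q} : Finset (Fin n)).card := (Finset.card_pair hpq).symm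
        _ ≤ Vf.card := by
            apply Finset.card_le_card
            intro w hw
            rcases Finset.mem_insert.mp hw with rfl | hw
            · exact hp
            · rw [Finset.mem_singleton] at hw; subst hw; exact hq
  have hCVf : {e ∈ C | ∀ v ∈ e, v ∈ Vf} = C := by
    ext e
    constructor
    · exact fun h => h.1
    · intro he; exact ⟨he, fun w hw => (hmemVf w).mpr ⟨e, he, hw⟩⟩
  have hpart2 : C.ncard ≤ 2 * Vf.card - 3 := by
    have := hLam Vf hV2; rwa [hCVf] at this
  have hCfin : C.Finite := Set.toFinite _
  set Cf : Finset (Sym2 (Fin n)) := hCfin.toFinset with hCfdef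
  have hmemCf : ∀ e, e ∈ Cf ↔ e ∈ C := fun e => Set.Finite.mem_toFinset hCfin
  have hCcard : C.ncard = Cf.card := Set.ncard_eq_toFinset_card _ hCfin
  have hdeg_eq : ∀ w, edeg C w = (Cf.filter (fun e => w ∈ e)).card := by
    intro w
    rw [edeg, ← Set.ncard_coe_finset]
    congr 1
    ext e
    simp only [Finset.coe_filter, Set.mem_setOf_eq, hmemCf]
  have hinner : ∀ e, e ∈ C → (Vf.filter (fun w => w ∈ e)).card = 2 := by
    intro e
    induction e using Sym2.ind with
    | _ x y =>
      intro heC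
      have hxy : x ≠ y := by
        have := hnd _ heC; rwa [Sym2.mk_isDiag_iff] at this
      have hfilt : Vf.filter (fun w => w ∈ s(x, y)) = {x, y} := by
        ext w
        simp only [Finset.mem_filter, Sym2.mem_iff, Finset.mem_insert,
          Finset.mem_singleton]
        constructor
        · rintro ⟨-, h⟩; exact h
        · intro h
          refine ⟨?_, h⟩
          rcases h with rfl | rfl
          · exact (hmemVf w).mpr ⟨s(w, y), heC, Sym2.mem_mk_left w y⟩
          · exact (hmemVf w).mpr ⟨s(x, w), heC, Sym2.mem_mk_right x w⟩
      rw [hfilt, Finset.card_pair hxy]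
  have hsum : ∑ w ∈ Vf, edeg C w = 2 * Cf.card := by
    calc ∑ w ∈ Vf, edeg C w
        = ∑ w ∈ Vf, ∑ e ∈ Cf, (if w ∈ e then 1 else 0) := by
          refine Finset.sum_congr rfl fun w _ => ?_
          rw [hdeg_eq w, Finset.card_filter]
      _ = ∑ e ∈ Cf, ∑ w ∈ Vf, (if w ∈ e then 1 else 0) := Finset.sum_comm
      _ = ∑ e ∈ Cf, 2 := by
          refine Finset.sum_congr rfl fun e he => ?_
          rw [← Finset.card_filter]
          exact hinner e ((hmemCf e).mp he)
      _ = 2 * Cf.card := by rw [Finset.sum_const, smul_eq_mul, mul_comm]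
  set Df : Finset (Fin n) := Vf.filter (fun w => edeg C w = 3) with hDf
  have hmin : ∀ w ∈ Vf, 3 ≤ edeg C w := fun w hw =>
    Stmt12Aux.circuit_mindeg hC ((hmemVf w).mp hw)
  have hlow : 3 * Df.card + 4 * (Vf.card - Df.card) ≤ ∑ w ∈ Vf, edeg C w := by
    rw [← Finset.sum_filter_add_sum_filter_not Vf (fun w => edeg C w = 3) (edeg C),
      ← hDf]
    have h1 : ∑ w ∈ Df, edeg C w = 3 * Df.card := by
      calc ∑ w ∈ Df, edeg C w = ∑ _w ∈ Df, 3 :=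
            Finset.sum_congr rfl fun w hw => (Finset.mem_filter.mp hw).2
        _ = 3 * Df.card := by rw [Finset.sum_const, smul_eq_mul, mul_comm]
    have hcard : (Vf.filter (fun w => ¬ edeg C w = 3)).card = Vf.card - Df.card := by
      have := Finset.card_filter_add_card_filter_not
        (s := Vf) (p := fun w => edeg C w = 3)
      rw [← hDf] at this
      omega
    have h2 : 4 * (Vf.card - Df.card) ≤
        ∑ w ∈ Vf.filter (fun w => ¬ edeg C w = 3), edeg C w := by
      calc 4 * (Vf.card - Df.card)
          = ∑ _w ∈ Vf.filter (fun w => ¬ edeg C w = 3), 4 := by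
            rw [Finset.sum_const, smul_eq_mul, mul_comm, hcard]
        _ ≤ _ := by
            refine Finset.sum_le_sum fun w hw => ?_
            have h3 := hmin w (Finset.mem_filter.mp hw).1
            have h4 := (Finset.mem_filter.mp hw).2
            omega
    omega
  have hDf6 : 6 ≤ Df.card := by
    have ht : Df.card ≤ Vf.card := Finset.card_filter_le _ _
    have h5 : Cf.card ≤ 2 * Vf.card - 3 := by rw [← hCcard]; exact hpart2
    omega
  refine ⟨hLam, by rw [hVcard]; exact hpart2, ?_⟩
  have hset : {v : Fin n | v ∈ vertsOf C ∧ edeg C v = 3} = ↑Df := by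
    ext w
    simp only [Set.mem_setOf_eq, hDf, Finset.coe_filter, hmemVf]
  rw [hset, Set.ncard_coe_finset]
  exact hDf6
end
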